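/- arXiv:2304.11826 — 3 statements merged into one kernel-verified Lean document; each statement's English description precedes it below -/
import Mathlib

section
/- Let (T,σ) be a leaf-colored planted phylogenetic tree and x ≠ y two leaves of T. Then the following are equivalent: (i) ℓ_μ(lca_T(x,y)) = □ (duplication) for every species tree S and every HGT-free σ-reconciliation (T,S,μ,σ) satisfying axiom (R5); (ii) there exist two distinct children v' and v'' of lca_T(x,y) in T such that σ(L(T(v'))) ∩ σ(L(T(v''))) ≠ ∅. -/
/-- A planted phylogenetic rooted tree, encoded by a parent function on a
finite vertex set.  The root `0_T` is a fixed point of `parent`; every vertex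
reaches the root by iterating `parent`; the root has exactly one child
(`planted`); and every inner vertex (non-root vertex having a child) has at
least two children (`phylo`). -/
structure PPTree where
  V : Type
  [fintypeV : Fintype V]
  [decEqV : DecidableEq V]
  root : V
  parent : V → V
  parent_root : parent root = root
  reach : ∀ v : V, ∃ n : ℕ, parent^[n] v = root
  planted : ∃! v : V, v ≠ root ∧ parent v = root
  phylo : ∀ v : V, v ≠ root → (∃ u, parent u = v ∧ u ≠ v) →
      ∃ u w, parent u = v ∧ parent w = v ∧ u ≠ w ∧ u ≠ v ∧ w ≠ v

attribute [instance] PPTree.fintypeV PPTree.decEqV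

namespace PPTree

variable (T : PPTree)

/-- `T.le x y` means `x ⪯_T y`, i.e. `y` is an ancestor of `x` (or `x = y`). -/
def le (x y : T.V) : Prop := ∃ n : ℕ, T.parent^[n] x = y

/-- `T.lt x y` means `x ≺_T y`. -/
def lt (x y : T.V) : Prop := T.le x y ∧ x ≠ y

/-- Leaves are the `⪯_T`-minimal vertices, i.e. vertices without children. -/
def isLeaf (v : T.V) : Prop := ∀ u, T.parent u = v → u = v

/-- Inner vertices: neither leaves nor the planted root. -/
def inner (v : T.V) : Prop := v ≠ T.root ∧ ¬ T.isLeaf v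

/-- The last common ancestor of two vertices: the `⪯_T`-minimal common
ancestor. -/
noncomputable def lca (x y : T.V) : T.V :=
  @Classical.epsilon _ ⟨T.root⟩
    fun v => T.le x v ∧ T.le y v ∧ ∀ w, T.le x w → T.le y w → T.le v w

/-- The last common ancestor of a set of vertices. -/
noncomputable def lcaSet (A : Set T.V) : T.V :=
  @Classical.epsilon _ ⟨T.root⟩
    fun v => (∀ a ∈ A, T.le a v) ∧ ∀ w, (∀ a ∈ A, T.le a w) → T.le v w

/-- `ρ_T`, the unique child of the planted root. -/
noncomputable def rho : T.V := T.planted.choose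

theorem rho_ne_root : T.rho ≠ T.root := T.planted.choose_spec.1.1

/-- Edges of `T`, identified with their child endpoint: the vertex `v ≠ 0_T`
represents the edge `(parent v, v)`. -/
abbrev Edge := {v : T.V // v ≠ T.root}

/-- The union `V(T) ∪ E(T)`. -/
abbrev VE := T.V ⊕ T.Edge

/-- The ancestor order `⪯_T` extended to `V(T) ∪ E(T)`: for an edge `e = uv`
(`u` the parent of `v`), `x ⪯ e` iff `x ⪯ v`, `e ⪯ x` iff `u ⪯ x`, and
`e ⪯ f` iff the child endpoints are comparable accordingly. -/
def leVE : T.VE → T.VE → Prop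
  | Sum.inl x, Sum.inl y => T.le x y
  | Sum.inl x, Sum.inr e => T.le x e.1
  | Sum.inr e, Sum.inl y => T.le (T.parent e.1) y
  | Sum.inr e, Sum.inr f => T.le e.1 f.1

def ltVE (a b : T.VE) : Prop := T.leVE a b ∧ a ≠ b

/-- Two elements of `V(T) ∪ E(T)` are comparable. -/
def cmpVE (a b : T.VE) : Prop := T.leVE a b ∨ T.leVE b a

/-- Membership in `L(T)` for elements of `V(T) ∪ E(T)`. -/
def isLeafVE : T.VE → Prop
  | Sum.inl v => T.isLeaf v
  | Sum.inr _ => False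

/-- Map an element of `V(T) ∪ E(T)` to a vertex (an edge `uv` is sent to its
child endpoint `v`). -/
def toVertex : T.VE → T.V
  | Sum.inl v => v
  | Sum.inr e => e.1

end PPTree

/-- Axioms (R0)–(R3) of a reconciliation map `μ : V(T) → V(S) ∪ E(S)`. -/
structure IsRecon (T S : PPTree) (μ : T.V → S.VE) : Prop where
  R0 : ∀ x, μ x = Sum.inl S.root ↔ x = T.root
  R1 : ∀ x, S.isLeafVE (μ x) ↔ T.isLeaf x
  R2 : ∀ x y, T.lt y x → (∃ u, μ x = Sum.inl u) → (∃ v, μ y = Sum.inl v) → μ x ≠ μ y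
  R3 : ∀ x y, T.lt y x → ¬ S.ltVE (μ x) (μ y)

/-- A reconciliation is HGT-free if the images of the endpoints of every edge
of `T` are `⪯_S`-comparable. -/
def IsHGTFree (T S : PPTree) (μ : T.V → S.VE) : Prop :=
  ∀ v : T.V, v ≠ T.root → S.cmpVE (μ (T.parent v)) (μ v)

/-- `(T,S,μ,σ)` is a σ-reconciliation when `μ` restricted to `L(T)` equals
`σ`. -/
def SigmaCompat (T S : PPTree) (μ : T.V → S.VE) (σ : T.V → S.V) : Prop :=
  ∀ x, T.isLeaf x → μ x = Sum.inl (σ x)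

/-- A time map for `T`. -/
def IsTimeMap (T : PPTree) (τ : T.V → ℝ) : Prop :=
  ∀ x y, T.lt x y → τ x < τ y

/-- Axioms (S0)–(S3) of a relaxed scenario `(T,S,μ,τ_T,τ_S)`. -/
structure IsRelaxedScenario (T S : PPTree) (μ : T.V → S.VE)
    (τT : T.V → ℝ) (τS : S.V → ℝ) : Prop where
  timeT : IsTimeMap T τT
  timeS : IsTimeMap S τS
  S0 : ∀ x, μ x = Sum.inl S.root ↔ x = T.root
  S1 : ∀ x, S.isLeafVE (μ x) ↔ T.isLeaf x
  S2 : ∀ x v, μ x = Sum.inl v → τS v = τT x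
  S3 : ∀ x (e : S.Edge), μ x = Sum.inr e → τS e.1 < τT x ∧ τT x < τS (S.parent e.1)

/-- A planted phylogenetic tree whose leaf set is (identified with) the finite
type `L` via the embedding `emb`. -/
structure LeafTree (L : Type) [Fintype L] [DecidableEq L] extends PPTree where
  emb : L → toPPTree.V
  emb_inj : Function.Injective emb
  emb_leaf : ∀ v : L, toPPTree.isLeaf (emb v)
  emb_surj : ∀ l, toPPTree.isLeaf l → ∃ v : L, emb v = l

/-- The tree `T` displays the rooted triple `ab|c`:
`lca(a,b) ≺ lca(a,c) = lca(b,c)`. -/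
def displaysTriple (T : PPTree) (a b c : T.V) : Prop :=
  T.lt (T.lca a b) (T.lca a c) ∧ T.lca a c = T.lca b c

section BMG

variable {V Y : Type} [Fintype V] [DecidableEq V]

/-- `y` is a best match of `x` in the leaf-colored tree `(T,σ)`:
`σ(x) ≠ σ(y)` and `lca(x,y) ⪯ lca(x,y')` for all leaves `y'` of the same color
as `y`. -/
def LeafTree.bestMatch (T : LeafTree V) (σ : V → Y) (x y : V) : Prop :=
  σ x ≠ σ y ∧ ∀ y' : V, σ y' = σ y →
    T.toPPTree.le (T.toPPTree.lca (T.emb x) (T.emb y))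
      (T.toPPTree.lca (T.emb x) (T.emb y'))

/-- `(G,σ)` is the best match graph `𝔅(T,σ)` of the leaf-colored tree
`(T,σ)`. -/
def Explains (T : LeafTree V) (σ : V → Y) (G : V → V → Prop) : Prop :=
  ∀ x y : V, G x y ↔ T.bestMatch σ x y

/-- The triple `ab|b'` is informative for `(G,σ)`. -/
def Informative (G : V → V → Prop) (σ : V → Y) (a b b' : V) : Prop :=
  a ≠ b ∧ a ≠ b' ∧ b ≠ b' ∧ σ a ≠ σ b ∧ σ b = σ b' ∧ G a b ∧ ¬ G a b'

/-- The triple `ab|b'` is forbidden for `(G,σ)`. -/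
def Forbidden (G : V → V → Prop) (σ : V → Y) (a b b' : V) : Prop :=
  a ≠ b ∧ a ≠ b' ∧ b ≠ b' ∧ σ a ≠ σ b ∧ σ b = σ b' ∧ G a b ∧ G a b'

end BMG

/-- Axiom (R5) for a reconciliation `(T,S,μ)`: whenever `μ(x) ∈ V⁰(S)`,
(i) `μ(x) = lca_S(μ(v'),μ(v''))` for at least two distinct children `v',v''`
of `x`, and (ii) the images of any two distinct children of `x` are
`⪯_S`-incomparable. -/
def R5 (T S : PPTree) (μ : T.V → S.VE) : Prop :=
  ∀ x u, μ x = Sum.inl u → u ≠ S.root → ¬ S.isLeaf u →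
    ((∃ v' v'' : T.V, v' ≠ v'' ∧
        T.parent v' = x ∧ v' ≠ x ∧ T.parent v'' = x ∧ v'' ≠ x ∧
        u = S.lca (S.toVertex (μ v')) (S.toVertex (μ v''))) ∧
     (∀ v' v'' : T.V, T.parent v' = x → v' ≠ x → T.parent v'' = x → v'' ≠ x →
        v' ≠ v'' → ¬ S.cmpVE (μ v') (μ v'')))

section Basics
open Classical
variable (T : PPTree)

namespace PPTree

theorem le_refl (v : T.V) : T.le v v := ⟨0, rfl⟩

theorem le_parent (v : T.V) : T.le v (T.parent v) := ⟨1, rfl⟩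

theorem le_trans {a b c : T.V} (h1 : T.le a b) (h2 : T.le b c) : T.le a c := by
  obtain ⟨n, rfl⟩ := h1; obtain ⟨m, rfl⟩ := h2
  exact ⟨m + n, (Function.iterate_add_apply _ m n a)⟩

theorem le_root (v : T.V) : T.le v T.root := T.reach v

theorem root_le {v : T.V} (h : T.le T.root v) : v = T.root := by
  obtain ⟨n, hn⟩ := h
  rw [Function.iterate_fixed T.parent_root] at hn; exact hn.symm

theorem parent_ne {v : T.V} (h : v ≠ T.root) : T.parent v ≠ v := by
  intro he
  obtain ⟨n, hn⟩ := T.reach v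
  rw [Function.iterate_fixed he] at hn; exact h hn

theorem le_antisymm {a b : T.V} (h1 : T.le a b) (h2 : T.le b a) : a = b := by
  obtain ⟨n, hn⟩ := h1; obtain ⟨m, hm⟩ := h2
  rcases Nat.eq_zero_or_pos (m + n) with h | h
  · obtain ⟨hm0, hn0⟩ := Nat.add_eq_zero.mp h
    subst hn0; simpa using hn
  · -- a is periodic with period m+n > 0, hence a = root
    have hper : T.parent^[m + n] a = a := by
      rw [Function.iterate_add_apply, hn, hm]
    obtain ⟨k, hk⟩ := T.reach a
    have : ∀ t, T.parent^[(m+n) * t] a = a := by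
      intro t; induction t with
      | zero => simp
      | succ t ih => rw [Nat.mul_succ, Function.iterate_add_apply, hper, ih]
    have h1 : T.parent^[(m+n) * k] a = a := this k
    have hk' : (m+n) * k ≥ k := Nat.le_mul_of_pos_left k h
    have : T.parent^[(m+n)*k] a = T.root := by
      rw [show (m+n)*k = ((m+n)*k - k) + k from (Nat.sub_add_cancel hk').symm,
        Function.iterate_add_apply, hk, Function.iterate_fixed T.parent_root]
    have ha : a = T.root := h1.symm.trans this
    subst ha
    rw [Function.iterate_fixed T.parent_root] at hn
    exact hn

theorem le_total_above {a b c : T.V} (h1 : T.le a b) (h2 : T.le a c) :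
    T.le b c ∨ T.le c b := by
  obtain ⟨n, hn⟩ := h1; obtain ⟨m, hm⟩ := h2
  rcases Nat.le_total n m with h | h
  · left; subst hn
    exact ⟨m - n, by rw [← Function.iterate_add_apply, Nat.sub_add_cancel h, hm]⟩
  · right; subst hm
    exact ⟨n - m, by rw [← Function.iterate_add_apply, Nat.sub_add_cancel h, hn]⟩

theorem le_leaf {a v : T.V} (hv : T.isLeaf v) (h : T.le a v) : a = v := by
  obtain ⟨n, hn⟩ := h
  induction n generalizing a with
  | zero => exact hn
  | succ n ih =>
    have : T.parent^[n] (T.parent a) = v := by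
      rw [← Function.iterate_succ_apply]; exact hn
    have hpa := ih this
    exact hv a hpa

theorem root_not_leaf : ¬ T.isLeaf T.root := by
  intro h
  exact T.planted.choose_spec.1.1 (h T.rho T.planted.choose_spec.1.2)

theorem leaf_ne_root {v : T.V} (h : T.isLeaf v) : v ≠ T.root := by
  rintro rfl; exact T.root_not_leaf h

theorem le_rho {v : T.V} (h : v ≠ T.root) : T.le v T.rho := by
  have hex : ∃ n, T.parent^[n] v = T.root := T.reach v
  classical
  have hn : T.parent^[Nat.find hex] v = T.root := Nat.find_spec hex
  have hn0 : Nat.find hex ≠ 0 := by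
    intro h0
    rw [h0] at hn; exact h hn
  obtain ⟨m, hm⟩ : ∃ m, Nat.find hex = m + 1 :=
    ⟨Nat.find hex - 1, (Nat.succ_pred_eq_of_pos (Nat.pos_of_ne_zero hn0)).symm⟩
  rw [hm] at hn
  have hmlt : m < Nat.find hex := hm ▸ Nat.lt_succ_self m
  have hm2 : T.parent^[m] v ≠ T.root := Nat.find_min hex hmlt
  have hpm : T.parent (T.parent^[m] v) = T.root := by
    rw [← Function.iterate_succ_apply' T.parent m v]; exact hn
  have : T.parent^[m] v = T.rho :=
    (T.planted.choose_spec.2 (T.parent^[m] v) ⟨hm2, hpm⟩)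
  exact ⟨m, this⟩

/-- Existence of the lca. -/
theorem lca_exists (x y : T.V) :
    ∃ v, T.le x v ∧ T.le y v ∧ ∀ w, T.le x w → T.le y w → T.le v w := by
  classical
  have hex : ∃ n, T.le x (T.parent^[n] x) ∧ T.le y (T.parent^[n] x) := by
    obtain ⟨k, hk⟩ := T.reach x
    exact ⟨k, by rw [hk]; exact ⟨T.le_root x, T.le_root y⟩⟩
  let n := Nat.find hex
  refine ⟨T.parent^[n] x, (Nat.find_spec hex).1, (Nat.find_spec hex).2, ?_⟩
  intro w hxw hyw
  obtain ⟨m, rfl⟩ := hxw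
  have hnm : n ≤ m := by
    by_contra hlt
    exact Nat.find_min hex (Nat.lt_of_not_le hlt) ⟨⟨m, rfl⟩ , hyw⟩
  exact ⟨m - n, by rw [← Function.iterate_add_apply, Nat.sub_add_cancel hnm]⟩

theorem lca_spec (x y : T.V) :
    T.le x (T.lca x y) ∧ T.le y (T.lca x y) ∧
      ∀ w, T.le x w → T.le y w → T.le (T.lca x y) w := by
  exact Classical.epsilon_spec (T.lca_exists x y)

theorem lca_ne_root {x y : T.V} (hx : x ≠ T.root) (hy : y ≠ T.root) :
    T.lca x y ≠ T.root := by
  intro h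
  have hs := T.lca_spec x y
  have := hs.2.2 T.rho (T.le_rho hx) (T.le_rho hy)
  rw [h] at this
  exact T.rho_ne_root (T.root_le this)

theorem lca_not_leaf {x y : T.V} (hxy : x ≠ y) : ¬ T.isLeaf (T.lca x y) := by
  intro h
  have hs := T.lca_spec x y
  exact hxy ((T.le_leaf h hs.1).trans (T.le_leaf h hs.2.1).symm)

theorem leVE_refl (a : T.VE) : T.leVE a a := by
  cases a with
  | inl v => exact T.le_refl v
  | inr e => exact T.le_refl e.1

theorem le_parent_of_le_ne {a b : T.V} (h : T.le a b) (hne : a ≠ b) :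
    T.le (T.parent a) b := by
  obtain ⟨n, hn⟩ := h
  cases n with
  | zero => exact absurd hn hne
  | succ m => exact ⟨m, by rw [← Function.iterate_succ_apply]; exact hn⟩

theorem leVE_trans {a b c : T.VE} (h1 : T.leVE a b) (h2 : T.leVE b c) :
    T.leVE a c := by
  cases a with
  | inl xa =>
    cases b with
    | inl xb =>
      cases c with
      | inl xc => exact T.le_trans h1 h2
      | inr f => exact T.le_trans h1 h2
    | inr e =>
      cases c with
      | inl xc => exact T.le_trans (T.le_trans h1 (T.le_parent e.1)) h2
      | inr f => exact T.le_trans h1 h2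
  | inr e =>
    cases b with
    | inl xb =>
      cases c with
      | inl xc => exact T.le_trans h1 h2
      | inr f => exact T.le_trans (T.le_trans (T.le_parent e.1) h1) h2
    | inr f =>
      cases c with
      | inl xc =>
        have key : T.le (T.parent e.1) (T.parent f.1) := by
          by_cases he : e.1 = f.1
          · rw [he]; exact T.le_refl _
          · exact T.le_trans (T.le_parent_of_le_ne h1 he) (T.le_parent f.1)
        exact T.le_trans key h2
      | inr g => exact T.le_trans h1 h2

/-- Child endpoint of a `VE` element: every `x ⪯ a` (vertex `x`) satisfies
`x ⪯ toVertex a`. -/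
theorem le_toVertex_of_leVE {w : T.V} {a : T.VE} (h : T.leVE (Sum.inl w) a) :
    T.le w (T.toVertex a) := by
  cases a with
  | inl v => exact h
  | inr e => exact h

/-- Two VE elements above a common vertex are comparable. -/
theorem cmpVE_of_common_below {w : T.V} {a b : T.VE}
    (ha : T.leVE (Sum.inl w) a) (hb : T.leVE (Sum.inl w) b) :
    T.cmpVE a b := by
  have h1 := T.le_toVertex_of_leVE ha
  have h2 := T.le_toVertex_of_leVE hb
  have htot := T.le_total_above h1 h2
  cases a with
  | inl va =>
    cases b with
    | inl vb => exact htot.imp id id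
    | inr f =>
      rcases htot with h | h
      · exact Or.inl h
      · by_cases he : f.1 = va
        · exact Or.inl (he ▸ T.le_refl va)
        · exact Or.inr (T.le_parent_of_le_ne h he)
  | inr e =>
    cases b with
    | inl vb =>
      rcases htot with h | h
      · by_cases he : e.1 = vb
        · exact Or.inr (he ▸ T.le_refl vb)
        · exact Or.inl (T.le_parent_of_le_ne h he)
      · exact Or.inr h
    | inr f => exact htot.imp id id

end PPTree
end Basics

section Mono
open PPTree

/-- In an HGT-free reconciliation, `μ` is monotone: `u ⪯_T v → μ(u) ⪯_S μ(v)`. -/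
theorem mu_mono {T S : PPTree} {μ : T.V → S.VE}
    (hR : IsRecon T S μ) (hH : IsHGTFree T S μ) {u v : T.V} (h : T.le u v) :
    S.leVE (μ u) (μ v) := by
  obtain ⟨n, rfl⟩ := h
  induction n with
  | zero => exact S.leVE_refl _
  | succ n ih =>
    rw [Function.iterate_succ_apply']
    set w := T.parent^[n] u with hw
    by_cases hroot : w = T.root
    · rw [hroot, T.parent_root, ← hroot]; exact ih
    · have hlt : T.lt w (T.parent w) := ⟨T.le_parent w, fun he => T.parent_ne hroot he.symm⟩
      have hcmp := hH w hroot
      have hR3 := hR.R3 (T.parent w) w hlt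
      have step : S.leVE (μ w) (μ (T.parent w)) := by
        rcases hcmp with h1 | h1
        · by_cases he : μ (T.parent w) = μ w
          · rw [he]; exact S.leVE_refl _
          · exact absurd ⟨h1, he⟩ hR3
        · exact h1
      exact S.leVE_trans ih step

end Mono

section Easy
open PPTree

theorem easy_direction {Y : Type} [Fintype Y] [DecidableEq Y]
    (T : PPTree) (σ : T.V → Y) (x y : T.V)
    (hx : T.isLeaf x) (hy : T.isLeaf y) (hxy : x ≠ y)
    (hii : ∃ v' v'' : T.V, v' ≠ v'' ∧
        T.parent v' = T.lca x y ∧ v' ≠ T.lca x y ∧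
        T.parent v'' = T.lca x y ∧ v'' ≠ T.lca x y ∧
        ∃ l l' : T.V, T.isLeaf l ∧ T.isLeaf l' ∧
          T.le l v' ∧ T.le l' v'' ∧ σ l = σ l')
    (S : LeafTree Y) (μ : T.V → S.toPPTree.VE)
    (hR : IsRecon T S.toPPTree μ) (hH : IsHGTFree T S.toPPTree μ)
    (h5 : R5 T S.toPPTree μ)
    (hcompat : ∀ l : T.V, T.isLeaf l → μ l = Sum.inl (S.emb (σ l))) :
    ∃ e : S.toPPTree.Edge, μ (T.lca x y) = Sum.inr e := by
  set z := T.lca x y with hz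
  obtain ⟨v', v'', hvne, hp', hne', hp'', hne'', l, l', hl, hl', hlv, hlv', hσ⟩ := hii
  cases hμz : μ z with
  | inr e => exact ⟨e, rfl⟩
  | inl u =>
    exfalso
    have hune : u ≠ S.toPPTree.root := by
      intro hu
      have := (hR.R0 z).mp (by rw [hμz, hu])
      exact T.lca_ne_root (T.leaf_ne_root hx) (T.leaf_ne_root hy) this
    have hunl : ¬ S.toPPTree.isLeaf u := by
      intro hu
      have : S.toPPTree.isLeafVE (μ z) := by rw [hμz]; exact hu
      exact T.lca_not_leaf hxy ((hR.R1 z).mp this)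
    have hinc := (h5 z u hμz hune hunl).2 v' v'' hp' hne' hp'' hne'' hvne
    apply hinc
    have h1 : S.toPPTree.leVE (Sum.inl (S.emb (σ l))) (μ v') := by
      have := mu_mono hR hH hlv
      rwa [hcompat l hl] at this
    have h2 : S.toPPTree.leVE (Sum.inl (S.emb (σ l))) (μ v'') := by
      have := mu_mono hR hH hlv'
      rw [hσ]
      rwa [hcompat l' hl'] at this
    exact S.toPPTree.cmpVE_of_common_below h1 h2

end Easy

namespace PPTree
variable (T : PPTree)

theorem exists_leaf_below (v : T.V) : ∃ l, T.isLeaf l ∧ T.le l v := by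
  classical
  have key : ∀ (n : ℕ) (v : T.V),
      (Finset.univ.filter (fun u => T.le u v)).card ≤ n →
      ∃ l, T.isLeaf l ∧ T.le l v := by
    intro n
    induction n with
    | zero =>
      intro v hcard
      exfalso
      have : v ∈ Finset.univ.filter (fun u => T.le u v) := by simp [T.le_refl v]
      have := Finset.card_pos.mpr ⟨v, this⟩
      omega
    | succ n ih =>
      intro v hcard
      by_cases hv : T.isLeaf v
      · exact ⟨v, hv, T.le_refl v⟩
      · simp only [PPTree.isLeaf, not_forall] at hv
        obtain ⟨u, hu, hune⟩ := hv
        have huv : T.le u v := by rw [← hu]; exact T.le_parent u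
        have hsub : (Finset.univ.filter (fun w => T.le w u)) ⊂
            (Finset.univ.filter (fun w => T.le w v)) := by
          refine Finset.ssubset_iff_of_subset ?_ |>.mpr ?_
          · intro w hw
            simp only [Finset.mem_filter, Finset.mem_univ, true_and] at hw ⊢
            exact T.le_trans hw huv
          · refine ⟨v, by simp [T.le_refl v], ?_⟩
            simp only [Finset.mem_filter, Finset.mem_univ, true_and]
            intro hvu
            exact hune (T.le_antisymm huv hvu)
        have hlt := Finset.card_lt_card hsub
        obtain ⟨l, hl, hlu⟩ := ih u (by omega)
        exact ⟨l, hl, T.le_trans hlu huv⟩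
  exact key _ v (Nat.le_refl _)

theorem child_exists {u z : T.V} (h : T.le u z) (hne : u ≠ z) :
    ∃ v, T.parent v = z ∧ v ≠ z ∧ T.le u v := by
  classical
  have hex : ∃ n, T.parent^[n] u = z := h
  have hn : T.parent^[Nat.find hex] u = z := Nat.find_spec hex
  have hn0 : Nat.find hex ≠ 0 := by intro h0; rw [h0] at hn; exact hne hn
  obtain ⟨m, hm⟩ : ∃ m, Nat.find hex = m + 1 :=
    ⟨Nat.find hex - 1, (Nat.succ_pred_eq_of_pos (Nat.pos_of_ne_zero hn0)).symm⟩
  rw [hm] at hn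
  refine ⟨T.parent^[m] u, ?_, ?_, ⟨m, rfl⟩⟩
  · rw [← Function.iterate_succ_apply' T.parent m u]; exact hn
  · exact Nat.find_min hex (hm ▸ Nat.lt_succ_self m)

theorem child_unique {z v v' u : T.V} (hz : z ≠ T.root)
    (hv : T.parent v = z) (hv1 : v ≠ z) (hv' : T.parent v' = z) (hv1' : v' ≠ z)
    (h : T.le u v) (h' : T.le u v') : v = v' := by
  rcases T.le_total_above h h' with hle | hle
  · by_cases he : v = v'
    · exact he
    · have h1 : T.le z v' := by rw [← hv]; exact T.le_parent_of_le_ne hle he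
      have h2 : T.le v' z := by rw [← hv']; exact T.le_parent v'
      exact absurd (T.le_antisymm h2 h1).symm (Ne.symm hv1')
  · by_cases he : v = v'
    · exact he
    · have h1 : T.le z v := by rw [← hv']; exact T.le_parent_of_le_ne hle (Ne.symm he)
      have h2 : T.le v z := by rw [← hv]; exact T.le_parent v
      exact absurd (T.le_antisymm h2 h1) hv1

theorem two_children {z : T.V} (hz : z ≠ T.root) (hl : ¬ T.isLeaf z) :
    ∃ v1 v2, T.parent v1 = z ∧ v1 ≠ z ∧ T.parent v2 = z ∧ v2 ≠ z ∧ v1 ≠ v2 := by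
  simp only [isLeaf, not_forall] at hl
  obtain ⟨u, hu, hune⟩ := hl
  obtain ⟨a, b, ha, hb, hab, haz, hbz⟩ := T.phylo z hz ⟨u, hu, hune⟩
  exact ⟨a, b, ha, haz, hb, hbz, hab⟩

theorem leaf_only_below {l u : T.V} (hl : T.isLeaf l) (h : T.le u l) : u = l :=
  T.le_leaf hl h

end PPTree

section Hard

open Classical
set_option linter.unusedSectionVars false
set_option linter.unusedVariables false

variable {Y : Type} [Fintype Y] [DecidableEq Y]
variable (T : PPTree) (σ : T.V → Y) (z : T.V)

/-- `v` is a child of `z`. -/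
def IsChild (v : T.V) : Prop := T.parent v = z ∧ v ≠ z

/-- Species `c` occurs below `v`. -/
def Below (c : Y) (v : T.V) : Prop := ∃ l, T.isLeaf l ∧ T.le l v ∧ σ l = c

/-- At least two species occur below `v`. -/
def Big (v : T.V) : Prop :=
  ∃ l l', T.isLeaf l ∧ T.isLeaf l' ∧ T.le l v ∧ T.le l' v ∧ σ l ≠ σ l'

/-- A leaf below `v`, by choice. -/
noncomputable def leafBelow (v : T.V) : T.V := (T.exists_leaf_below v).choose

theorem leafBelow_isLeaf (v : T.V) : T.isLeaf (leafBelow T v) :=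
  (T.exists_leaf_below v).choose_spec.1

theorem leafBelow_le (v : T.V) : T.le (leafBelow T v) v :=
  (T.exists_leaf_below v).choose_spec.2

/-- The species of (the chosen leaf below) `v`. -/
noncomputable def spc (v : T.V) : Y := σ (leafBelow T v)

theorem Below_spc (v : T.V) : Below T σ (spc T σ v) v :=
  ⟨leafBelow T v, leafBelow_isLeaf T v, leafBelow_le T v, rfl⟩

theorem spc_eq {v l : T.V} (hb : ¬ Big T σ v) (hl : T.isLeaf l) (hlv : T.le l v) :
    σ l = spc T σ v := by
  by_contra hne
  exact hb ⟨l, leafBelow T v, hl, leafBelow_isLeaf T v, hlv, leafBelow_le T v, hne⟩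

theorem leaf_not_big {v : T.V} (hv : T.isLeaf v) : ¬ Big T σ v := by
  rintro ⟨l, l', _, _, hl, hl', hne⟩
  exact hne (by rw [T.le_leaf hv hl, T.le_leaf hv hl'])

/-- The raw vertex type of the species tree. -/
abbrev SV0 : Type := (Unit ⊕ Unit) ⊕ (T.V ⊕ Y)

/-- Valid vertices: block vertices only for big children of `z`. -/
def OK : SV0 T (Y := Y) → Prop
  | Sum.inr (Sum.inl v) => IsChild T z v ∧ Big T σ v
  | _ => True

/-- Vertex set of the species tree. -/
def SVt : Type := {a : SV0 T (Y := Y) // OK T σ z a}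

noncomputable instance : Fintype (SVt T σ z) :=
  @Subtype.fintype _ _ (Classical.decPred _) _

instance : DecidableEq (SVt T σ z) := Subtype.instDecidableEq

variable {T σ z} in
@[simp] theorem OK_root : OK T σ z (Sum.inl (Sum.inl ())) := trivial
variable {T σ z} in
@[simp] theorem OK_rho : OK T σ z (Sum.inl (Sum.inr ())) := trivial
variable {T σ z} in
@[simp] theorem OK_leaf (c : Y) : OK T σ z (Sum.inr (Sum.inr c)) := trivial

variable {T σ z}

/-- Named vertices. -/
def rootS : SVt T σ z := ⟨Sum.inl (Sum.inl ()), trivial⟩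
def rhoS : SVt T σ z := ⟨Sum.inl (Sum.inr ()), trivial⟩
def leafS (c : Y) : SVt T σ z := ⟨Sum.inr (Sum.inr c), trivial⟩
def blkS (v : T.V) (h : IsChild T z v ∧ Big T σ v) : SVt T σ z := ⟨Sum.inr (Sum.inl v), h⟩

variable (T σ z) in
/-- Pre-parent function on raw vertices. -/
noncomputable def p0 : SV0 T (Y := Y) → SV0 T (Y := Y)
  | Sum.inl (Sum.inl ()) => Sum.inl (Sum.inl ())
  | Sum.inl (Sum.inr ()) => Sum.inl (Sum.inl ())
  | Sum.inr (Sum.inl _) => Sum.inl (Sum.inr ())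
  | Sum.inr (Sum.inr c) =>
      if h : ∃ v, IsChild T z v ∧ Big T σ v ∧ Below T σ c v then
        Sum.inr (Sum.inl h.choose)
      else Sum.inl (Sum.inr ())

theorem p0_ok {a : SV0 T (Y := Y)} (_ : OK T σ z a) : OK T σ z (p0 T σ z a) := by
  rcases a with (⟨⟩|⟨⟩) | (v|c)
  · trivial
  · trivial
  · trivial
  · simp only [p0]
    split_ifs with h
    · exact ⟨h.choose_spec.1, h.choose_spec.2.1⟩
    · trivial

/-- The parent function of the species tree. -/
noncomputable def Sparent (a : SVt T σ z) : SVt T σ z :=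
  ⟨p0 T σ z a.1, p0_ok a.2⟩


theorem SVt_ext {a b : SVt T σ z} (h : a.1 = b.1) : a = b := Subtype.ext h

@[simp] theorem rhoS_ne_rootS : (rhoS : SVt T σ z) ≠ rootS := by
  intro h; exact absurd (congrArg Subtype.val h) (by simp [rhoS, rootS])

@[simp] theorem leafS_ne_rootS (c : Y) : (leafS c : SVt T σ z) ≠ rootS := by
  intro h; exact absurd (congrArg Subtype.val h) (by simp [leafS, rootS])

@[simp] theorem leafS_ne_rhoS (c : Y) : (leafS c : SVt T σ z) ≠ rhoS := by
  intro h; exact absurd (congrArg Subtype.val h) (by simp [leafS, rhoS])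

@[simp] theorem blkS_ne_rootS (v : T.V) (h) : (blkS v h : SVt T σ z) ≠ rootS := by
  intro he; exact absurd (congrArg Subtype.val he) (by simp [blkS, rootS])

@[simp] theorem blkS_ne_rhoS (v : T.V) (h) : (blkS v h : SVt T σ z) ≠ rhoS := by
  intro he; exact absurd (congrArg Subtype.val he) (by simp [blkS, rhoS])

@[simp] theorem blkS_ne_leafS (v : T.V) (h) (c : Y) :
    (blkS v h : SVt T σ z) ≠ leafS c := by
  intro he; exact absurd (congrArg Subtype.val he) (by simp [blkS, leafS])

theorem leafS_inj {c c' : Y} (h : (leafS c : SVt T σ z) = leafS c') : c = c' := by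
  have := congrArg Subtype.val h
  simpa [leafS] using this

theorem blkS_inj {v v' : T.V} {h h'} (he : (blkS v h : SVt T σ z) = blkS v' h') :
    v = v' := by
  have := congrArg Subtype.val he
  simpa [blkS] using this

@[simp] theorem Sparent_rootS : Sparent (rootS : SVt T σ z) = rootS := rfl
@[simp] theorem Sparent_rhoS : Sparent (rhoS : SVt T σ z) = rootS := rfl
@[simp] theorem Sparent_blkS (v : T.V) (h) :
    Sparent (blkS v h : SVt T σ z) = rhoS := rfl

/-- Pairwise disjointness of species sets of the children of `z`. -/
def Disj : Prop := ∀ v v' : T.V, IsChild T z v → IsChild T z v' → v ≠ v' →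
    ∀ c : Y, ¬(Below T σ c v ∧ Below T σ c v')

variable (hdisj : Disj (T := T) (σ := σ) (z := z))

include hdisj in
theorem child_unique_below {v v' : T.V} {c : Y} (hv : IsChild T z v)
    (hv' : IsChild T z v') (h : Below T σ c v) (h' : Below T σ c v') : v = v' := by
  by_contra hne
  exact hdisj v v' hv hv' hne c ⟨h, h'⟩

include hdisj in
theorem Sparent_leafS_big {c : Y} {v : T.V} (hv : IsChild T z v) (hb : Big T σ v)
    (hB : Below T σ c v) :
    Sparent (leafS c : SVt T σ z) = blkS v ⟨hv, hb⟩ := by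
  apply SVt_ext
  show p0 T σ z (Sum.inr (Sum.inr c)) = Sum.inr (Sum.inl v)
  have hex : ∃ w, IsChild T z w ∧ Big T σ w ∧ Below T σ c w := ⟨v, hv, hb, hB⟩
  simp only [p0, dif_pos hex]
  congr 1
  exact congrArg Sum.inl
    (child_unique_below hdisj hex.choose_spec.1 hv hex.choose_spec.2.2 hB)

include hdisj in
theorem Sparent_leafS_small {c : Y} {v : T.V} (hv : IsChild T z v)
    (hb : ¬ Big T σ v) (hB : Below T σ c v) :
    Sparent (leafS c : SVt T σ z) = rhoS := by
  apply SVt_ext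
  show p0 T σ z (Sum.inr (Sum.inr c)) = Sum.inl (Sum.inr ())
  have hex : ¬ ∃ w, IsChild T z w ∧ Big T σ w ∧ Below T σ c w := by
    rintro ⟨w, hw, hwb, hwB⟩
    exact hb (child_unique_below hdisj hw hv hwB hB ▸ hwb)
  simp only [p0, dif_neg hex]

theorem Sparent_leafS_rest {c : Y} (h : ¬ ∃ v, IsChild T z v ∧ Below T σ c v) :
    Sparent (leafS c : SVt T σ z) = rhoS := by
  apply SVt_ext
  show p0 T σ z (Sum.inr (Sum.inr c)) = Sum.inl (Sum.inr ())
  have hex : ¬ ∃ w, IsChild T z w ∧ Big T σ w ∧ Below T σ c w := by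
    rintro ⟨w, hw, hwb, hwB⟩
    exact h ⟨w, hw, hwB⟩
  simp only [p0, dif_neg hex]

theorem Sparent_leafS_cases (c : Y) :
    Sparent (leafS c : SVt T σ z) = rhoS ∨
    ∃ v h, Sparent (leafS c : SVt T σ z) = blkS v h ∧ Below T σ c v := by
  by_cases hex : ∃ w, IsChild T z w ∧ Big T σ w ∧ Below T σ c w
  · right
    refine ⟨hex.choose, ⟨hex.choose_spec.1, hex.choose_spec.2.1⟩, ?_, hex.choose_spec.2.2⟩
    apply SVt_ext
    show p0 T σ z (Sum.inr (Sum.inr c)) = Sum.inr (Sum.inl hex.choose)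
    simp only [p0, dif_pos hex]
  · left
    apply SVt_ext
    show p0 T σ z (Sum.inr (Sum.inr c)) = Sum.inl (Sum.inr ())
    simp only [p0, dif_neg hex]

theorem no_child_of_leafS {c : Y} {u : SVt T σ z} (h : Sparent u = leafS c) :
    False := by
  have h1 : p0 T σ z u.1 = Sum.inr (Sum.inr c) := congrArg Subtype.val h
  rcases hu : u.1 with (⟨⟩|⟨⟩) | (v|c')
  · rw [hu] at h1; simp [p0] at h1
  · rw [hu] at h1; simp [p0] at h1
  · rw [hu] at h1; simp [p0] at h1
  · rw [hu] at h1
    simp only [p0] at h1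
    split_ifs at h1 <;> simp at h1

theorem Sparent_depth3 (a : SVt T σ z) :
    Sparent (Sparent (Sparent a)) = rootS := by
  apply SVt_ext
  show p0 T σ z (p0 T σ z (p0 T σ z a.1)) = Sum.inl (Sum.inl ())
  rcases a.1 with (⟨⟩|⟨⟩) | (v|c)
  · rfl
  · rfl
  · rfl
  · simp only [p0]
    split_ifs <;> rfl

/-- The `S`-vertex corresponding to a child `v` of `z`. -/
noncomputable def schild (v : T.V) : SVt T σ z :=
  if h : IsChild T z v ∧ Big T σ v then blkS v h else leafS (spc T σ v)

@[simp] theorem schild_ne_rootS (v : T.V) : (schild v : SVt T σ z) ≠ rootS := by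
  unfold schild; split_ifs <;> simp

@[simp] theorem schild_ne_rhoS (v : T.V) : (schild v : SVt T σ z) ≠ rhoS := by
  unfold schild; split_ifs <;> simp

include hdisj in
theorem Sparent_schild {v : T.V} (hv : IsChild T z v) :
    Sparent (schild v : SVt T σ z) = rhoS := by
  unfold schild
  split_ifs with h
  · exact Sparent_blkS v h
  · have hb : ¬ Big T σ v := fun hb => h ⟨hv, hb⟩
    exact Sparent_leafS_small hdisj hv hb (Below_spc T σ v)

include hdisj in
theorem schild_inj {v v' : T.V} (hv : IsChild T z v) (hv' : IsChild T z v')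
    (hne : v ≠ v') : (schild v : SVt T σ z) ≠ schild v' := by
  unfold schild
  split_ifs with h h' h''
  · intro he; exact hne (blkS_inj he)
  · exact blkS_ne_leafS _ _ _
  · exact fun he => blkS_ne_leafS _ _ _ he.symm
  · intro he
    have hcc := leafS_inj he
    exact hne (child_unique_below hdisj hv hv' (Below_spc T σ v) (hcc ▸ Below_spc T σ v'))

variable (hz_root : z ≠ T.root) (hz_leaf : ¬ T.isLeaf z)

include hdisj hz_root hz_leaf in
theorem exists_two_schildren :
    ∃ v1 v2 : T.V, IsChild T z v1 ∧ IsChild T z v2 ∧ v1 ≠ v2 := by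
  obtain ⟨v1, v2, h1, h1z, h2, h2z, hne⟩ := T.two_children hz_root hz_leaf
  exact ⟨v1, v2, ⟨h1, h1z⟩, ⟨h2, h2z⟩, hne⟩

/-- The species tree, as a planted phylogenetic tree. -/
noncomputable def SP (hdisj : Disj (T := T) (σ := σ) (z := z))
    (hz_root : z ≠ T.root) (hz_leaf : ¬ T.isLeaf z) : PPTree where
  V := SVt T σ z
  fintypeV := inferInstance
  decEqV := inferInstance
  root := rootS
  parent := Sparent
  parent_root := rfl
  reach := fun a => ⟨3, Sparent_depth3 a⟩
  planted := by
    refine ⟨rhoS, ⟨rhoS_ne_rootS, rfl⟩, ?_⟩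
    rintro u ⟨hu1, hu2⟩
    have h1 : p0 T σ z u.1 = Sum.inl (Sum.inl ()) := congrArg Subtype.val hu2
    rcases hu : u.1 with (⟨⟩|⟨⟩) | (v|c)
    · exact absurd (SVt_ext hu) hu1
    · exact SVt_ext hu
    · rw [hu] at h1; simp [p0] at h1
    · rw [hu] at h1; simp only [p0] at h1; split_ifs at h1 <;> simp at h1
  phylo := by
    rintro u hu ⟨w, hw, hwne⟩
    obtain ⟨v1, v2, hv1, hv2, hne⟩ := exists_two_schildren hdisj hz_root hz_leaf
    rcases hu' : u.1 with (⟨⟩|⟨⟩) | (v|c)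
    · exact absurd (SVt_ext hu') hu
    · -- u = rhoS
      have hu2 : u = rhoS := SVt_ext hu'
      subst hu2
      refine ⟨schild v1, schild v2, ?_, ?_, ?_, ?_, ?_⟩
      · exact Sparent_schild hdisj hv1
      · exact Sparent_schild hdisj hv2
      · exact schild_inj hdisj hv1 hv2 hne
      · exact schild_ne_rhoS v1
      · exact schild_ne_rhoS v2
    · -- u = blkS v
      have hok : IsChild T z v ∧ Big T σ v := by
        have := u.2; rw [hu'] at this; exact this
      have hu2 : u = blkS v hok := SVt_ext hu'
      subst hu2
      obtain ⟨l, l', hl, hl', hlv, hlv', hσ⟩ := hok.2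
      refine ⟨leafS (σ l), leafS (σ l'), ?_, ?_, ?_, ?_, ?_⟩
      · exact Sparent_leafS_big hdisj hok.1 hok.2 ⟨l, hl, hlv, rfl⟩
      · exact Sparent_leafS_big hdisj hok.1 hok.2 ⟨l', hl', hlv', rfl⟩
      · intro he; exact hσ (leafS_inj he)
      · exact fun he => blkS_ne_leafS _ _ _ he.symm
      · exact fun he => blkS_ne_leafS _ _ _ he.symm
    · -- u = leafS c: no children
      exfalso
      have hu2 : u = leafS c := SVt_ext hu'
      subst hu2
      exact no_child_of_leafS hw

/-- The species tree, as a leaf-colored tree on `Y`. -/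
noncomputable def Stree (hdisj : Disj (T := T) (σ := σ) (z := z))
    (hz_root : z ≠ T.root) (hz_leaf : ¬ T.isLeaf z) : LeafTree Y where
  toPPTree := SP hdisj hz_root hz_leaf
  emb := fun c => leafS c
  emb_inj := fun c c' h => leafS_inj h
  emb_leaf := fun c u hu => absurd hu (fun h => no_child_of_leafS h)
  emb_surj := by
    intro l hl
    obtain ⟨v1, v2, hv1, hv2, hne⟩ := exists_two_schildren hdisj hz_root hz_leaf
    rcases hu : l.1 with (⟨⟩|⟨⟩) | (v|c)
    · exfalso
      have hl2 : l = rootS := SVt_ext hu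
      subst hl2
      exact rhoS_ne_rootS (hl rhoS rfl)
    · exfalso
      have hl2 : l = rhoS := SVt_ext hu
      subst hl2
      exact schild_ne_rhoS v1 (hl (schild v1) (Sparent_schild hdisj hv1))
    · exfalso
      have hok : IsChild T z v ∧ Big T σ v := by
        have := l.2; rw [hu] at this; exact this
      have hl2 : l = blkS v hok := SVt_ext hu
      subst hl2
      obtain ⟨w, w', hw, hw', hwv, hwv', hσ⟩ := hok.2
      exact blkS_ne_leafS _ _ _
        (hl (leafS (σ w)) (Sparent_leafS_big hdisj hok.1 hok.2 ⟨w, hw, hwv, rfl⟩)).symm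
    · exact ⟨c, SVt_ext hu.symm⟩

variable (hdisj : Disj (T := T) (σ := σ) (z := z)) (hz_root : z ≠ T.root)
  (hz_leaf : ¬ T.isLeaf z) in
theorem Sle_iff (a b : SVt T σ z) :
    (SP hdisj hz_root hz_leaf).le a b ↔
      b = a ∨ b = Sparent a ∨ b = Sparent (Sparent a) ∨ b = rootS := by
  constructor
  · rintro ⟨n, hn⟩
    match n, hn with
    | 0, hn => exact Or.inl hn.symm
    | 1, hn => exact Or.inr (Or.inl hn.symm)
    | 2, hn => exact Or.inr (Or.inr (Or.inl hn.symm))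
    | (n+3), hn =>
      refine Or.inr (Or.inr (Or.inr ?_))
      replace hn := (Function.iterate_add_apply (SP hdisj hz_root hz_leaf).parent n 3 a).symm.trans hn
      have h3 : (SP hdisj hz_root hz_leaf).parent^[3] a = rootS := Sparent_depth3 a
      rw [h3] at hn
      rw [Function.iterate_fixed (f := (SP hdisj hz_root hz_leaf).parent)
        (x := (rootS : SVt T σ z)) rfl] at hn
      exact hn.symm
  · rintro (rfl | rfl | rfl | rfl)
    · exact ⟨0, rfl⟩
    · exact ⟨1, rfl⟩
    · exact ⟨2, rfl⟩
    · exact ⟨3, Sparent_depth3 a⟩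

theorem Sanc_rho {w : SVt T σ z} (h : (SP hdisj hz_root hz_leaf).le rhoS w) :
    w = rhoS ∨ w = rootS := by
  rcases (Sle_iff hdisj hz_root hz_leaf _ _).mp h with rfl | rfl | rfl | rfl
  · exact Or.inl rfl
  · exact Or.inr rfl
  · exact Or.inr rfl
  · exact Or.inr rfl

theorem Sanc_leaf {c : Y} {w : SVt T σ z}
    (h : (SP hdisj hz_root hz_leaf).le (leafS c) w) :
    w = leafS c ∨ w = rhoS ∨ w = rootS ∨
      ∃ v hv, w = blkS v hv ∧ Below T σ c v := by
  rcases Sparent_leafS_cases (T := T) (σ := σ) (z := z) c with hp | ⟨v, hv, hp, hB⟩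
  · rcases (Sle_iff hdisj hz_root hz_leaf _ _).mp h with rfl | rfl | rfl | rfl
    · exact Or.inl rfl
    · exact Or.inr (Or.inl hp)
    · rw [hp]; exact Or.inr (Or.inr (Or.inl rfl))
    · exact Or.inr (Or.inr (Or.inl rfl))
  · rcases (Sle_iff hdisj hz_root hz_leaf _ _).mp h with rfl | rfl | rfl | rfl
    · exact Or.inl rfl
    · exact Or.inr (Or.inr (Or.inr ⟨v, hv, hp, hB⟩))
    · rw [hp]; exact Or.inr (Or.inl rfl)
    · exact Or.inr (Or.inr (Or.inl rfl))

include hdisj in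
theorem Sanc_schild {v : T.V} (hv : IsChild T z v) {w : SVt T σ z}
    (h : (SP hdisj hz_root hz_leaf).le (schild v) w) :
    w = schild v ∨ w = rhoS ∨ w = rootS := by
  rcases (Sle_iff hdisj hz_root hz_leaf _ _).mp h with rfl | rfl | rfl | rfl
  · exact Or.inl rfl
  · exact Or.inr (Or.inl (Sparent_schild hdisj hv))
  · rw [Sparent_schild hdisj hv]; exact Or.inr (Or.inr rfl)
  · exact Or.inr (Or.inr rfl)

theorem Sle_leafS_rhoS (c : Y) :
    (SP hdisj hz_root hz_leaf).le (leafS c) rhoS := by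
  rcases Sparent_leafS_cases (T := T) (σ := σ) (z := z) c with hp | ⟨v, hv, hp, hB⟩
  · exact (Sle_iff hdisj hz_root hz_leaf _ _).mpr (Or.inr (Or.inl hp.symm))
  · refine (Sle_iff hdisj hz_root hz_leaf _ _).mpr (Or.inr (Or.inr (Or.inl ?_)))
    rw [hp]
    exact (Sparent_blkS v hv).symm

include hdisj in
theorem Sle_schild_rhoS {v : T.V} (hv : IsChild T z v) :
    (SP hdisj hz_root hz_leaf).le (schild v) rhoS :=
  (Sle_iff hdisj hz_root hz_leaf _ _).mpr (Or.inr (Or.inl (Sparent_schild hdisj hv).symm))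

theorem S_lca_children {a b : SVt T σ z} (ha : Sparent a = rhoS)
    (hb : Sparent b = rhoS) (hne : a ≠ b) :
    (SP hdisj hz_root hz_leaf).lca a b = rhoS := by
  set S := SP hdisj hz_root hz_leaf with hS
  have hspec := S.lca_spec a b
  have hanca : ∀ w, S.le a w → w = a ∨ w = rhoS ∨ w = rootS := by
    intro w hw
    rcases (Sle_iff hdisj hz_root hz_leaf _ _).mp hw with rfl | rfl | rfl | rfl
    · exact Or.inl rfl
    · exact Or.inr (Or.inl ha)
    · rw [ha]; exact Or.inr (Or.inr rfl)
    · exact Or.inr (Or.inr rfl)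
  have hancb : ∀ w, S.le b w → w = b ∨ w = rhoS ∨ w = rootS := by
    intro w hw
    rcases (Sle_iff hdisj hz_root hz_leaf _ _).mp hw with rfl | rfl | rfl | rfl
    · exact Or.inl rfl
    · exact Or.inr (Or.inl hb)
    · rw [hb]; exact Or.inr (Or.inr rfl)
    · exact Or.inr (Or.inr rfl)
  have hlrho : S.le (S.lca a b) rhoS :=
    hspec.2.2 rhoS ⟨1, ha⟩ ⟨1, hb⟩
  rcases hanca _ hspec.1 with hL | hL | hL
  · -- lca = a
    rcases hancb _ hspec.2.1 with hL' | hL' | hL'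
    · exact absurd (hL ▸ hL') hne
    · exact hL'
    · rw [hL'] at hlrho
      exact absurd (S.root_le hlrho) rhoS_ne_rootS
  · exact hL
  · rw [hL] at hlrho
    exact absurd (S.root_le hlrho) rhoS_ne_rootS

theorem not_isLeaf_rootS : ¬ (SP hdisj hz_root hz_leaf).isLeaf rootS := by
  intro h
  exact rhoS_ne_rootS (h rhoS rfl)

theorem not_isLeaf_rhoS : ¬ (SP hdisj hz_root hz_leaf).isLeaf rhoS := by
  intro h
  obtain ⟨v1, v2, hv1, hv2, hne⟩ := exists_two_schildren hdisj hz_root hz_leaf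
  exact schild_ne_rhoS v1 (h (schild v1) (Sparent_schild hdisj hv1))

theorem isLeaf_leafS (c : Y) : (SP hdisj hz_root hz_leaf).isLeaf (leafS c) :=
  fun u hu => absurd hu (fun h => no_child_of_leafS h)

variable (T z) in
/-- The child of `z` above a given vertex `u ≺ z` (junk value otherwise). -/
noncomputable def child0 (u : T.V) : T.V :=
  if h : ∃ v, (IsChild T z v) ∧ T.le u v then h.choose else z

theorem child0_spec {u : T.V} (hle : T.le u z) (hne : u ≠ z) :
    IsChild T z (child0 T z u) ∧ T.le u (child0 T z u) := by
  obtain ⟨v, hv1, hv2, hv3⟩ := T.child_exists hle hne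
  have hex : ∃ v, (IsChild T z v) ∧ T.le u v := ⟨v, ⟨hv1, hv2⟩, hv3⟩
  unfold child0
  rw [dif_pos hex]
  exact hex.choose_spec

include hz_root in
theorem child0_eq {u v : T.V} (hle : T.le u z) (hne : u ≠ z)
    (hv : IsChild T z v) (huv : T.le u v) : child0 T z u = v := by
  have h := child0_spec hle hne
  exact T.child_unique hz_root h.1.1 h.1.2 hv.1 hv.2 h.2 huv

variable (T σ z) in
/-- The reconciliation map. -/
noncomputable def mu (hdisj : Disj (T := T) (σ := σ) (z := z))
    (hz_root : z ≠ T.root) (hz_leaf : ¬ T.isLeaf z) :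
    T.V → (SP hdisj hz_root hz_leaf).VE := fun u =>
  if u = T.root then Sum.inl rootS
  else if T.isLeaf u then Sum.inl (leafS (σ u))
  else if u = z then Sum.inl rhoS
  else if T.le u z then Sum.inr ⟨schild (child0 T z u), schild_ne_rootS _⟩
  else Sum.inr ⟨rhoS, rhoS_ne_rootS⟩

theorem mu_root : mu T σ z hdisj hz_root hz_leaf T.root = Sum.inl rootS := by
  unfold mu; rw [if_pos rfl]; rfl

theorem mu_leaf {u : T.V} (h : T.isLeaf u) :
    mu T σ z hdisj hz_root hz_leaf u = Sum.inl (leafS (σ u)) := by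
  unfold mu; rw [if_neg (T.leaf_ne_root h), if_pos h]; rfl

theorem mu_z : mu T σ z hdisj hz_root hz_leaf z = Sum.inl rhoS := by
  unfold mu; rw [if_neg hz_root, if_neg hz_leaf, if_pos rfl]; rfl

theorem mu_below {u : T.V} (h1 : u ≠ T.root) (h2 : ¬ T.isLeaf u) (h3 : u ≠ z)
    (h4 : T.le u z) :
    mu T σ z hdisj hz_root hz_leaf u =
      Sum.inr ⟨schild (child0 T z u), schild_ne_rootS _⟩ := by
  unfold mu; rw [if_neg h1, if_neg h2, if_neg h3, if_pos h4]

theorem mu_far {u : T.V} (h1 : u ≠ T.root) (h2 : ¬ T.isLeaf u) (h3 : u ≠ z)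
    (h4 : ¬ T.le u z) :
    mu T σ z hdisj hz_root hz_leaf u = Sum.inr ⟨rhoS, rhoS_ne_rootS⟩ := by
  unfold mu; rw [if_neg h1, if_neg h2, if_neg h3, if_neg h4]

theorem mu_inl_cases {u : T.V} {w : SVt T σ z}
    (h : mu T σ z hdisj hz_root hz_leaf u = Sum.inl w) :
    (u = T.root ∧ w = rootS) ∨ (T.isLeaf u ∧ w = leafS (σ u)) ∨
      (u = z ∧ w = rhoS) := by
  by_cases h1 : u = T.root
  · subst h1; rw [mu_root] at h
    exact Or.inl ⟨rfl, (Sum.inl.injEq _ _ ▸ h : _) ▸ rfl⟩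
  by_cases h2 : T.isLeaf u
  · rw [mu_leaf hdisj hz_root hz_leaf h2] at h
    exact Or.inr (Or.inl ⟨h2, by injection h.symm⟩)
  by_cases h3 : u = z
  · subst h3; rw [mu_z] at h
    exact Or.inr (Or.inr ⟨rfl, by injection h.symm⟩)
  by_cases h4 : T.le u z
  · rw [mu_below hdisj hz_root hz_leaf h1 h2 h3 h4] at h; simp at h
  · rw [mu_far hdisj hz_root hz_leaf h1 h2 h3 h4] at h; simp at h

include hz_root in
theorem ne_root_of_le_z {u : T.V} (h : T.le u z) : u ≠ T.root := by
  rintro rfl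
  exact hz_root (T.root_le h)

include hdisj in
theorem Sle_leafS_schild {c : Y} {w : T.V} (hw : IsChild T z w)
    (hB : Below T σ c w) :
    (SP hdisj hz_root hz_leaf).le (leafS c) (schild w) := by
  unfold schild
  split_ifs with h
  · exact ⟨1, Sparent_leafS_big hdisj hw h.2 hB⟩
  · have hb : ¬ Big T σ w := fun hb => h ⟨hw, hb⟩
    obtain ⟨l, hl, hlw, hlc⟩ := hB
    have : c = spc T σ w := by rw [← hlc]; exact spc_eq T σ hb hl hlw
    rw [this]
    exact (SP hdisj hz_root hz_leaf).le_refl _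

include hdisj in
theorem not_Sle_leafS_leafS {a b : T.V} (ha : IsChild T z a) (hb : IsChild T z b)
    (hne : a ≠ b) {c c' : Y} (hBa : Below T σ c a) (hBb : Below T σ c' b) :
    ¬ (SP hdisj hz_root hz_leaf).le (leafS c) (leafS c') := by
  intro h
  rcases Sanc_leaf hdisj hz_root hz_leaf h with he | he | he | ⟨v, hv, he, hBv⟩
  · have : c = c' := leafS_inj he.symm
    subst this
    exact hdisj a b ha hb hne c ⟨hBa, hBb⟩
  · exact leafS_ne_rhoS c' he
  · exact leafS_ne_rootS c' he
  · exact blkS_ne_leafS v hv c' he.symm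

include hdisj in
theorem not_Sle_leafS_schild {a b : T.V} (ha : IsChild T z a) (hb : IsChild T z b)
    (hne : a ≠ b) {c : Y} (hBa : Below T σ c a) :
    ¬ (SP hdisj hz_root hz_leaf).le (leafS c) (schild b) := by
  intro h
  rcases Sanc_leaf hdisj hz_root hz_leaf h with he | he | he | ⟨v, hv, he, hBv⟩
  · -- schild b = leafS c
    unfold schild at he
    split_ifs at he with hbig
    · exact blkS_ne_leafS b hbig c he
    · have : spc T σ b = c := leafS_inj he
      exact hdisj a b ha hb hne c ⟨hBa, this ▸ Below_spc T σ b⟩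
  · exact schild_ne_rhoS b he
  · exact schild_ne_rootS b he
  · -- schild b = blkS v, Below c v
    unfold schild at he
    split_ifs at he with hbig
    · have : b = v := blkS_inj he
      subst this
      exact hdisj a b ha hb hne c ⟨hBa, hBv⟩
    · exact blkS_ne_leafS v hv _ he.symm

include hdisj in
theorem not_Sle_schild_schild {a b : T.V} (ha : IsChild T z a) (hb : IsChild T z b)
    (hne : a ≠ b) :
    ¬ (SP hdisj hz_root hz_leaf).le (schild a) (schild b) := by
  intro h
  rcases Sanc_schild hdisj hz_root hz_leaf ha h with he | he | he
  · exact schild_inj hdisj ha hb hne he.symm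
  · exact schild_ne_rhoS b he
  · exact schild_ne_rootS b he

include hz_root in
theorem child_ne_root {v : T.V} (hv : IsChild T z v) : v ≠ T.root := by
  rintro rfl
  exact hz_root (T.parent_root ▸ hv.1).symm

theorem mu_child_form {v : T.V} (hv : IsChild T z v) :
    (T.isLeaf v ∧ mu T σ z hdisj hz_root hz_leaf v = Sum.inl (leafS (σ v)) ∧
        schild v = (leafS (σ v) : SVt T σ z)) ∨
    mu T σ z hdisj hz_root hz_leaf v =
      Sum.inr ⟨schild v, schild_ne_rootS v⟩ := by
  by_cases hleaf : T.isLeaf v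
  · refine Or.inl ⟨hleaf, mu_leaf hdisj hz_root hz_leaf hleaf, ?_⟩
    unfold schild
    rw [dif_neg (fun h => leaf_not_big T σ hleaf h.2)]
    have := spc_eq T σ (leaf_not_big T σ hleaf) hleaf (T.le_refl v)
    rw [← this]
  · right
    have hlevz : T.le v z := ⟨1, hv.1⟩
    have h := mu_below hdisj hz_root hz_leaf (child_ne_root hz_root hv) hleaf hv.2 hlevz
    rw [h, child0_eq hz_root hlevz hv.2 hv (T.le_refl v)]

theorem mu_child_toVertex {v : T.V} (hv : IsChild T z v) :
    (SP hdisj hz_root hz_leaf).toVertex (mu T σ z hdisj hz_root hz_leaf v) =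
      schild v := by
  rcases mu_child_form hdisj hz_root hz_leaf hv with ⟨hl, hm, hs⟩ | hm
  · rw [hm, hs]; rfl
  · rw [hm]; rfl

include hdisj in
theorem Below_of_leaf_child {v : T.V} (hv : IsChild T z v) (hl : T.isLeaf v) :
    Below T σ (σ v) v := ⟨v, hl, T.le_refl v, rfl⟩

theorem mu_sigma_compat :
    ∀ l : T.V, T.isLeaf l →
      mu T σ z hdisj hz_root hz_leaf l =
        Sum.inl ((Stree hdisj hz_root hz_leaf).emb (σ l)) :=
  fun l hl => mu_leaf hdisj hz_root hz_leaf hl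

theorem mu_R0 : ∀ u, mu T σ z hdisj hz_root hz_leaf u =
    Sum.inl (SP hdisj hz_root hz_leaf).root ↔ u = T.root := by
  intro u
  constructor
  · intro h
    rcases mu_inl_cases hdisj hz_root hz_leaf h with ⟨h1, _⟩ | ⟨h2, hw⟩ | ⟨h3, hw⟩
    · exact h1
    · exact absurd hw.symm (leafS_ne_rootS _)
    · exact absurd hw.symm rhoS_ne_rootS
  · rintro rfl
    exact mu_root hdisj hz_root hz_leaf

theorem mu_R1 : ∀ u, (SP hdisj hz_root hz_leaf).isLeafVE
    (mu T σ z hdisj hz_root hz_leaf u) ↔ T.isLeaf u := by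
  intro u
  by_cases h1 : u = T.root
  · subst h1; rw [mu_root]
    exact iff_of_false (not_isLeaf_rootS hdisj hz_root hz_leaf) T.root_not_leaf
  by_cases h2 : T.isLeaf u
  · rw [mu_leaf hdisj hz_root hz_leaf h2]
    exact iff_of_true (isLeaf_leafS hdisj hz_root hz_leaf (σ u)) h2
  by_cases h3 : u = z
  · subst h3; rw [mu_z]
    exact iff_of_false (not_isLeaf_rhoS hdisj hz_root hz_leaf) hz_leaf
  by_cases h4 : T.le u z
  · rw [mu_below hdisj hz_root hz_leaf h1 h2 h3 h4]
    exact iff_of_false (fun h => h.elim) h2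
  · rw [mu_far hdisj hz_root hz_leaf h1 h2 h3 h4]
    exact iff_of_false (fun h => h.elim) h2

theorem mu_R2 : ∀ a b, T.lt b a →
    (∃ u, mu T σ z hdisj hz_root hz_leaf a = Sum.inl u) →
    (∃ v, mu T σ z hdisj hz_root hz_leaf b = Sum.inl v) →
    mu T σ z hdisj hz_root hz_leaf a ≠ mu T σ z hdisj hz_root hz_leaf b := by
  rintro a b hlt ⟨u, hu⟩ ⟨v, hv⟩ heq
  rcases mu_inl_cases hdisj hz_root hz_leaf hu with ⟨ha, hwa⟩ | ⟨ha, hwa⟩ | ⟨ha, hwa⟩ <;>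
    rcases mu_inl_cases hdisj hz_root hz_leaf hv with ⟨hb, hwb⟩ | ⟨hb, hwb⟩ | ⟨hb, hwb⟩
  · exact hlt.2 (hb.trans ha.symm)
  · -- a = root, b leaf
    rw [hu, hv, hwa, hwb] at heq
    exact leafS_ne_rootS (σ b) (by injection heq.symm)
  · rw [hu, hv, hwa, hwb] at heq
    exact rhoS_ne_rootS (by injection heq.symm)
  · -- a leaf, b = root: lt b a with a leaf means b = a
    exact hlt.2 (T.le_leaf ha hlt.1)
  · exact hlt.2 (T.le_leaf ha hlt.1)
  · exact hlt.2 (T.le_leaf ha hlt.1)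
  · -- a = z, b = root: le b a with b = root
    subst ha hb
    exact hz_root (T.root_le hlt.1)
  · -- a = z, b leaf
    rw [hu, hv, hwa, hwb] at heq
    exact leafS_ne_rhoS (σ b) (by injection heq.symm)
  · exact hlt.2 (hb.trans ha.symm)

theorem Sroot_le' {w : SVt T σ z} (h : (SP hdisj hz_root hz_leaf).le rootS w) :
    w = rootS := (SP hdisj hz_root hz_leaf).root_le h

theorem mu_R3 : ∀ a b, T.lt b a →
    ¬ (SP hdisj hz_root hz_leaf).ltVE (mu T σ z hdisj hz_root hz_leaf a)
      (mu T σ z hdisj hz_root hz_leaf b) := by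
  intro a b hlt hcon
  obtain ⟨hle, hne⟩ := hcon
  by_cases h1 : a = T.root
  · subst h1
    rw [mu_root] at hle hne
    cases hb : mu T σ z hdisj hz_root hz_leaf b with
    | inl w =>
      rw [hb] at hle hne
      have hw : w = rootS := Sroot_le' hdisj hz_root hz_leaf hle
      subst hw
      exact hne rfl
    | inr f =>
      rw [hb] at hle
      exact f.2 (Sroot_le' hdisj hz_root hz_leaf hle)
  by_cases h2 : T.isLeaf a
  · exact hlt.2 (T.le_leaf h2 hlt.1)
  by_cases h3 : a = z
  · subst h3
    rw [mu_z] at hle hne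
    have hbz : b ≠ T.root := ne_root_of_le_z hz_root hlt.1
    by_cases hbl : T.isLeaf b
    · rw [mu_leaf hdisj hz_root hz_leaf hbl] at hle
      rcases Sanc_rho hdisj hz_root hz_leaf hle with he | he
      · exact leafS_ne_rhoS (σ b) he
      · exact leafS_ne_rootS (σ b) he
    · rw [mu_below hdisj hz_root hz_leaf hbz hbl hlt.2 hlt.1] at hle
      rcases Sanc_rho hdisj hz_root hz_leaf hle with he | he
      · exact schild_ne_rhoS _ he
      · exact schild_ne_rootS _ he
  by_cases h4 : T.le a z
  · have hca := child0_spec h4 h3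
    rw [mu_below hdisj hz_root hz_leaf h1 h2 h3 h4] at hle hne
    cases hb : mu T σ z hdisj hz_root hz_leaf b with
    | inl w =>
      rw [hb] at hle hne
      have hle' : (SP hdisj hz_root hz_leaf).le
          (Sparent (schild (child0 T z a))) w := hle
      rw [Sparent_schild hdisj hca.1] at hle'
      rcases mu_inl_cases hdisj hz_root hz_leaf hb with ⟨hb1, hw⟩ | ⟨hb1, hw⟩ | ⟨hb1, hw⟩
      · subst hb1
        exact h1 (T.root_le hlt.1)
      · subst hw
        rcases Sanc_rho hdisj hz_root hz_leaf hle' with he | he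
        · exact leafS_ne_rhoS (σ b) he
        · exact leafS_ne_rootS (σ b) he
      · subst hb1
        exact h3 (T.le_antisymm h4 hlt.1)
    | inr f =>
      rw [hb] at hle hne
      have hble : T.le b z := T.le_trans hlt.1 h4
      have hbz : b ≠ z := by
        rintro rfl
        exact h3 (T.le_antisymm h4 hlt.1)
      have hbroot : b ≠ T.root := ne_root_of_le_z hz_root hble
      by_cases hbl : T.isLeaf b
      · rw [mu_leaf hdisj hz_root hz_leaf hbl] at hb
        exact absurd hb (by simp)
      · rw [mu_below hdisj hz_root hz_leaf hbroot hbl hbz hble] at hb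
        have hf : f = ⟨schild (child0 T z b), schild_ne_rootS _⟩ := by
          injection hb with h5; exact h5.symm
        subst hf
        have hcb := child0_spec hble hbz
        have hle' : (SP hdisj hz_root hz_leaf).le (schild (child0 T z a))
            (schild (child0 T z b)) := hle
        rcases Sanc_schild hdisj hz_root hz_leaf hca.1 hle' with he | he | he
        · exact hne (by rw [Sum.inr.injEq]; exact Subtype.ext he.symm)
        · exact schild_ne_rhoS _ he
        · exact schild_ne_rootS _ he
  · rw [mu_far hdisj hz_root hz_leaf h1 h2 h3 h4] at hle hne
    cases hb : mu T σ z hdisj hz_root hz_leaf b with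
    | inl w =>
      rw [hb] at hle hne
      have hle' : (SP hdisj hz_root hz_leaf).le rootS w := hle
      have hw := Sroot_le' hdisj hz_root hz_leaf hle'
      subst hw
      rcases mu_inl_cases hdisj hz_root hz_leaf hb with ⟨hb1, hw⟩ | ⟨hb1, hw⟩ | ⟨hb1, hw⟩
      · subst hb1
        exact h1 (T.root_le hlt.1)
      · exact leafS_ne_rootS (σ b) hw.symm
      · exact rhoS_ne_rootS hw.symm
    | inr f =>
      rw [hb] at hle hne
      have hle' : (SP hdisj hz_root hz_leaf).le rhoS f.1 := hle
      rcases Sanc_rho hdisj hz_root hz_leaf hle' with he | he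
      · -- f.1 = rhoS : then mu b must be the far edge, equal to mu a
        have hbroot : b ≠ T.root := by
          rintro rfl
          exact h1 (T.root_le hlt.1)
        by_cases hbl : T.isLeaf b
        · rw [mu_leaf hdisj hz_root hz_leaf hbl] at hb
          exact absurd hb (by simp)
        by_cases hbz : b = z
        · subst hbz
          rw [mu_z] at hb
          exact absurd hb (by simp)
        by_cases hble : T.le b z
        · rw [mu_below hdisj hz_root hz_leaf hbroot hbl hbz hble] at hb
          have hf : f = ⟨schild (child0 T z b), schild_ne_rootS _⟩ := by
            injection hb with h5; exact h5.symm
          rw [hf] at he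
          exact schild_ne_rhoS _ he
        · rw [mu_far hdisj hz_root hz_leaf hbroot hbl hbz hble] at hb
          have hf : f = ⟨rhoS, rhoS_ne_rootS⟩ := by
            injection hb with h5; exact h5.symm
          subst hf
          exact hne rfl
      · exact f.2 he

theorem not_leaf_parent {v : T.V} (hv : v ≠ T.root) : ¬ T.isLeaf (T.parent v) :=
  fun h => T.parent_ne hv (h v rfl).symm

theorem mu_hgt : IsHGTFree T (SP hdisj hz_root hz_leaf)
    (mu T σ z hdisj hz_root hz_leaf) := by
  intro v hv
  by_cases hp : T.parent v = T.root
  · rw [hp, mu_root]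
    right
    cases hm : mu T σ z hdisj hz_root hz_leaf v with
    | inl w => exact (SP hdisj hz_root hz_leaf).le_root w
    | inr e => exact (SP hdisj hz_root hz_leaf).le_root _
  have hpl : ¬ T.isLeaf (T.parent v) := not_leaf_parent hv
  by_cases hvl : T.isLeaf v
  · rw [mu_leaf hdisj hz_root hz_leaf hvl]
    by_cases hpz : T.parent v = z
    · rw [hpz, mu_z]
      exact Or.inr (Sle_leafS_rhoS hdisj hz_root hz_leaf (σ v))
    by_cases hplez : T.le (T.parent v) z
    · rw [mu_below hdisj hz_root hz_leaf hp hpl hpz hplez]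
      refine Or.inr ?_
      have hcp := child0_spec hplez hpz
      exact Sle_leafS_schild hdisj hz_root hz_leaf hcp.1
        ⟨v, hvl, T.le_trans (T.le_parent v) hcp.2, rfl⟩
    · rw [mu_far hdisj hz_root hz_leaf hp hpl hpz hplez]
      exact Or.inr (Sle_leafS_rhoS hdisj hz_root hz_leaf (σ v))
  by_cases hvz : v = z
  · subst hvz
    rw [mu_z]
    have hpz : T.parent v ≠ v := T.parent_ne hv
    have hplez : ¬ T.le (T.parent v) v := fun h =>
      hpz (T.le_antisymm (T.le_parent v) h).symm
    rw [mu_far hdisj hz_root hz_leaf hp hpl hpz hplez]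
    exact Or.inr ((SP hdisj hz_root hz_leaf).le_refl _)
  by_cases hvle : T.le v z
  · rw [mu_below hdisj hz_root hz_leaf hv hvl hvz hvle]
    by_cases hpz : T.parent v = z
    · rw [hpz, mu_z]
      right
      have : child0 T z v = v := child0_eq hz_root hvle hvz ⟨hpz, hvz⟩ (T.le_refl v)
      show (SP hdisj hz_root hz_leaf).le
        ((SP hdisj hz_root hz_leaf).parent (schild (child0 T z v))) rhoS
      have hps : (SP hdisj hz_root hz_leaf).parent (schild (child0 T z v)) = rhoS := by
        rw [this]; exact Sparent_schild hdisj ⟨hpz, hvz⟩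
      rw [hps]
      exact (SP hdisj hz_root hz_leaf).le_refl _
    · have hplez : T.le (T.parent v) z := T.le_parent_of_le_ne hvle hvz
      rw [mu_below hdisj hz_root hz_leaf hp hpl hpz hplez]
      left
      have hcv := child0_spec hvle hvz
      have hvne : v ≠ child0 T z v := by
        rintro he
        exact hpz (he ▸ hcv.1.1)
      have : child0 T z (T.parent v) = child0 T z v :=
        child0_eq hz_root hplez hpz hcv.1 (T.le_parent_of_le_ne hcv.2 hvne)
      show (SP hdisj hz_root hz_leaf).le (schild (child0 T z (T.parent v)))
        (schild (child0 T z v))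
      rw [this]
      exact (SP hdisj hz_root hz_leaf).le_refl _
  · rw [mu_far hdisj hz_root hz_leaf hv hvl hvz hvle]
    have hpz : T.parent v ≠ z := fun h => hvle ⟨1, h⟩
    have hplez : ¬ T.le (T.parent v) z := fun h =>
      hvle (T.le_trans (T.le_parent v) h)
    rw [mu_far hdisj hz_root hz_leaf hp hpl hpz hplez]
    exact Or.inl ((SP hdisj hz_root hz_leaf).le_refl _)

theorem mu_R5 : R5 T (SP hdisj hz_root hz_leaf) (mu T σ z hdisj hz_root hz_leaf) := by
  intro x u hxu hune hunl
  rcases mu_inl_cases hdisj hz_root hz_leaf hxu with ⟨hx1, hw⟩ | ⟨hx1, hw⟩ | ⟨hx1, hw⟩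
  · exact absurd hw hune
  · subst hw
    exact absurd (isLeaf_leafS hdisj hz_root hz_leaf (σ x)) hunl
  · subst hx1 hw
    constructor
    · obtain ⟨v1, v2, hv1, hv2, hne⟩ := exists_two_schildren hdisj hz_root hz_leaf
      refine ⟨v1, v2, hne, hv1.1, hv1.2, hv2.1, hv2.2, ?_⟩
      rw [mu_child_toVertex hdisj hz_root hz_leaf hv1,
        mu_child_toVertex hdisj hz_root hz_leaf hv2]
      exact (S_lca_children hdisj hz_root hz_leaf (Sparent_schild hdisj hv1)
        (Sparent_schild hdisj hv2) (schild_inj hdisj hv1 hv2 hne)).symm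
    · intro a b hpa hna hpb hnb hab hcmp
      have ha := And.intro hpa hna
      have hb := And.intro hpb hnb
      rcases mu_child_form hdisj hz_root hz_leaf ha with ⟨hal, ham, has⟩ | ham <;>
        rcases mu_child_form hdisj hz_root hz_leaf hb with ⟨hbl, hbm, hbs⟩ | hbm
      · rw [ham, hbm] at hcmp
        rcases hcmp with h | h
        · exact not_Sle_leafS_leafS hdisj hz_root hz_leaf ha hb hab
            (Below_of_leaf_child hdisj ha hal) (Below_of_leaf_child hdisj hb hbl) h
        · exact not_Sle_leafS_leafS hdisj hz_root hz_leaf hb ha (Ne.symm hab)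
            (Below_of_leaf_child hdisj hb hbl) (Below_of_leaf_child hdisj ha hal) h
      · rw [ham, hbm] at hcmp
        rcases hcmp with h | h
        · exact not_Sle_leafS_schild hdisj hz_root hz_leaf ha hb hab
            (Below_of_leaf_child hdisj ha hal) h
        · -- le (Sparent (schild b)) (leafS (σ a))
          have h' : (SP hdisj hz_root hz_leaf).le
              (Sparent (schild b)) (leafS (σ a)) := h
          rw [Sparent_schild hdisj hb] at h'
          rcases Sanc_rho hdisj hz_root hz_leaf h' with he | he
          · exact leafS_ne_rhoS (σ a) he
          · exact leafS_ne_rootS (σ a) he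
      · rw [ham, hbm] at hcmp
        rcases hcmp with h | h
        · have h' : (SP hdisj hz_root hz_leaf).le
              (Sparent (schild a)) (leafS (σ b)) := h
          rw [Sparent_schild hdisj ha] at h'
          rcases Sanc_rho hdisj hz_root hz_leaf h' with he | he
          · exact leafS_ne_rhoS (σ b) he
          · exact leafS_ne_rootS (σ b) he
        · exact not_Sle_leafS_schild hdisj hz_root hz_leaf hb ha (Ne.symm hab)
            (Below_of_leaf_child hdisj hb hbl) h
      · rw [ham, hbm] at hcmp
        rcases hcmp with h | h
        · exact not_Sle_schild_schild hdisj hz_root hz_leaf ha hb hab h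
        · exact not_Sle_schild_schild hdisj hz_root hz_leaf hb ha (Ne.symm hab) h

theorem mu_isRecon : IsRecon T (SP hdisj hz_root hz_leaf)
    (mu T σ z hdisj hz_root hz_leaf) where
  R0 := mu_R0 hdisj hz_root hz_leaf
  R1 := mu_R1 hdisj hz_root hz_leaf
  R2 := mu_R2 hdisj hz_root hz_leaf
  R3 := mu_R3 hdisj hz_root hz_leaf

end Hard
/-- For a leaf-colored planted phylogenetic tree `(T,σ)`
(with species set `Y`) and distinct leaves `x ≠ y`, the following are
equivalent: (i) `ℓ_μ(lca_T(x,y)) = □` (i.e. `μ(lca_T(x,y)) ∈ E(S)`) for every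
species tree `S` on `Y` and every HGT-free σ-reconciliation `(T,S,μ,σ)`
satisfying (R5); (ii) there are two distinct children `v',v''` of
`lca_T(x,y)` with `σ(L(T(v'))) ∩ σ(L(T(v''))) ≠ ∅`. -/
theorem always_duplication_iff_children_species_overlap
    {Y : Type} [Fintype Y] [DecidableEq Y]
    (T : PPTree) (σ : T.V → Y)
    (x y : T.V) (hx : T.isLeaf x) (hy : T.isLeaf y) (hxy : x ≠ y) :
    (∀ (S : LeafTree Y) (μ : T.V → S.toPPTree.VE),
        IsRecon T S.toPPTree μ → IsHGTFree T S.toPPTree μ →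
        R5 T S.toPPTree μ →
        (∀ l : T.V, T.isLeaf l → μ l = Sum.inl (S.emb (σ l))) →
        ∃ e : S.toPPTree.Edge, μ (T.lca x y) = Sum.inr e) ↔
    (∃ v' v'' : T.V, v' ≠ v'' ∧
        T.parent v' = T.lca x y ∧ v' ≠ T.lca x y ∧
        T.parent v'' = T.lca x y ∧ v'' ≠ T.lca x y ∧
        ∃ l l' : T.V, T.isLeaf l ∧ T.isLeaf l' ∧
          T.le l v' ∧ T.le l' v'' ∧ σ l = σ l') := by
  constructor
  · intro hi
    by_contra hii
    set z := T.lca x y with hzdef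
    have hz_root : z ≠ T.root :=
      T.lca_ne_root (T.leaf_ne_root hx) (T.leaf_ne_root hy)
    have hz_leaf : ¬ T.isLeaf z := T.lca_not_leaf hxy
    have hdisj : Disj (T := T) (σ := σ) (z := z) := by
      intro v v' hv hv' hne c hc
      obtain ⟨l, hl, hlv, hlc⟩ := hc.1
      obtain ⟨l', hl', hlv', hlc'⟩ := hc.2
      exact hii ⟨v, v', hne, hv.1, hv.2, hv'.1, hv'.2, l, l', hl, hl', hlv, hlv',
        hlc.trans hlc'.symm⟩
    obtain ⟨e, he⟩ := hi (Stree hdisj hz_root hz_leaf)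
      (mu T σ z hdisj hz_root hz_leaf)
      (mu_isRecon hdisj hz_root hz_leaf)
      (mu_hgt hdisj hz_root hz_leaf)
      (mu_R5 hdisj hz_root hz_leaf)
      (mu_sigma_compat hdisj hz_root hz_leaf)
    rw [mu_z] at he
    exact absurd he (by simp)
  · intro hii S μ hR hH h5 hcompat
    exact easy_direction T σ x y hx hy hxy hii S μ hR hH h5 hcompat
end

section
/- An undirected graph G is an undirected Fitch graph, i.e., G = 𝔉_sym(T,H) for some rooted tree T with leaf set V(G) and some H ⊆ E(T), if and only if G is a complete multipartite graph. -/
/-- A finite rooted tree, encoded by a parent function: the root is a fixed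
point of `parent`, and every vertex reaches the root by iterating `parent`. -/
structure RTree where
  V : Type
  [fintypeV : Fintype V]
  [decEqV : DecidableEq V]
  root : V
  parent : V → V
  parent_root : parent root = root
  reach : ∀ v : V, ∃ n : ℕ, parent^[n] v = root

attribute [instance] RTree.fintypeV RTree.decEqV

namespace RTree

variable (T : RTree)

/-- `T.le x y` means `x ⪯_T y`, i.e. `y` is an ancestor of `x` (or `x = y`). -/
def le (x y : T.V) : Prop := ∃ n : ℕ, T.parent^[n] x = y

/-- `T.lt x y` means `x ≺_T y`. -/
def lt (x y : T.V) : Prop := T.le x y ∧ x ≠ y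

/-- Leaves are the `⪯_T`-minimal vertices, i.e. vertices without children. -/
def isLeaf (v : T.V) : Prop := ∀ u, T.parent u = v → u = v

/-- The last common ancestor of two vertices: the `⪯_T`-minimal common
ancestor. -/
noncomputable def lca (x y : T.V) : T.V :=
  @Classical.epsilon _ ⟨T.root⟩
    fun v => T.le x v ∧ T.le y v ∧ ∀ w, T.le x w → T.le y w → T.le v w

end RTree

/-- A rooted tree whose leaf set is (identified with) the finite type `L`
via the embedding `emb`.  Edges of the tree are identified with their child
endpoints (the vertex `w ≠ root` represents the edge `(parent w, w)`). -/
structure LeafRTree (L : Type) [Fintype L] [DecidableEq L] extends RTree where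
  emb : L → toRTree.V
  emb_inj : Function.Injective emb
  emb_leaf : ∀ v : L, toRTree.isLeaf (emb v)
  emb_surj : ∀ l, toRTree.isLeaf l → ∃ v : L, emb v = l

section Fitch

variable {L : Type} [Fintype L] [DecidableEq L]

/-- Arc `(x,y)` of the directed Fitch graph `𝔉(T,H)`: the path from
`lca_T(x,y)` to `y` contains an edge of `H` (edges are identified with their
child endpoints `w`, so the edges of this path are those with
`y ⪯ w ≺ lca_T(x,y)`). -/
def FitchArc (T : LeafRTree L) (H : Set T.toRTree.V) (x y : L) : Prop :=
  ∃ w : T.toRTree.V, w ∈ H ∧ T.toRTree.le (T.emb y) w ∧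
    T.toRTree.lt w (T.toRTree.lca (T.emb x) (T.emb y))

/-- `G` is a directed Fitch graph: `G = 𝔉(T,H)` for some rooted tree `T`
with leaf set `L` and some set `H ⊆ E(T)` of HGT-edges. -/
def IsFitch (G : L → L → Prop) : Prop :=
  ∃ (T : LeafRTree L) (H : Set T.toRTree.V),
    H ⊆ {v : T.toRTree.V | v ≠ T.toRTree.root} ∧
    ∀ x y : L, G x y ↔ FitchArc T H x y

/-- The closed complementary neighborhood `N̄[x] = {y : (x,y) ∉ E(G)}`. -/
def Nbar (G : L → L → Prop) (x : L) : Set L := {y : L | ¬ G x y}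

end Fitch

/-- Edge `xy` of the undirected Fitch graph `𝔉_sym(T,H)`: the path in `T`
between `x` and `y` contains an edge of `H` (edges are identified with their
child endpoints `w`; the edges of the path between `x` and `y` are those with
`x ⪯ w` or `y ⪯ w`, and `w ≺ lca_T(x,y)`). -/
def FitchEdgeSym {L : Type} [Fintype L] [DecidableEq L]
    (T : LeafRTree L) (H : Set T.toRTree.V) (x y : L) : Prop :=
  ∃ w : T.toRTree.V, w ∈ H ∧
    (T.toRTree.le (T.emb x) w ∨ T.toRTree.le (T.emb y) w) ∧
    T.toRTree.lt w (T.toRTree.lca (T.emb x) (T.emb y))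

namespace RTree

variable {T : RTree}

lemma le_refl (v : T.V) : T.le v v := ⟨0, rfl⟩

lemma le_trans {u v w : T.V} (h1 : T.le u v) (h2 : T.le v w) : T.le u w := by
  obtain ⟨n, hn⟩ := h1; obtain ⟨m, hm⟩ := h2
  exact ⟨m + n, by rw [Function.iterate_add_apply, hn, hm]⟩

lemma iterate_root (n : ℕ) : T.parent^[n] T.root = T.root :=
  Function.iterate_fixed T.parent_root n

lemma le_root (v : T.V) : T.le v T.root := T.reach v

lemma le_antisymm {u v : T.V} (h1 : T.le u v) (h2 : T.le v u) : u = v := by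
  obtain ⟨n, hn⟩ := h1; obtain ⟨m, hm⟩ := h2
  rcases Nat.eq_zero_or_pos (m + n) with h | h
  · have : n = 0 := by omega
    subst this; exact hn
  · -- u lies on a cycle, so u = root
    have cyc : ∀ t : ℕ, T.parent^[(m + n) * t] u = u := by
      intro t
      induction t with
      | zero => rfl
      | succ k ih =>
        rw [Nat.mul_succ, Function.iterate_add_apply,
          Function.iterate_add_apply, hn, hm, ih]
    obtain ⟨N, hN⟩ := T.reach u
    have hle : N ≤ (m + n) * (N + 1) := by nlinarith
    have : u = T.root := by
      have := cyc (N + 1)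
      rw [show (m + n) * (N + 1) = ((m + n) * (N + 1) - N) + N by omega,
        Function.iterate_add_apply, hN, iterate_root] at this
      exact this.symm
    subst this
    rw [iterate_root] at hn
    exact hn

lemma chain {x a b : T.V} (ha : T.le x a) (hb : T.le x b) :
    T.le a b ∨ T.le b a := by
  obtain ⟨n, hn⟩ := ha; obtain ⟨m, hm⟩ := hb
  rcases le_total n m with h | h
  · left; exact ⟨m - n, by rw [← hn, ← Function.iterate_add_apply, Nat.sub_add_cancel h, hm]⟩
  · right; exact ⟨n - m, by rw [← hm, ← Function.iterate_add_apply, Nat.sub_add_cancel h, hn]⟩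

def lcaSpec (x y v : T.V) : Prop :=
  T.le x v ∧ T.le y v ∧ ∀ w, T.le x w → T.le y w → T.le v w

lemma lca_exists (x y : T.V) : ∃ v, lcaSpec x y v := by
  classical
  have hex : ∃ n : ℕ, T.le y (T.parent^[n] x) := by
    obtain ⟨n, hn⟩ := T.reach x
    exact ⟨n, hn ▸ le_root y⟩
  let n₀ := Nat.find hex
  refine ⟨T.parent^[n₀] x, ⟨n₀, rfl⟩, Nat.find_spec hex, ?_⟩
  rintro w ⟨m, hm⟩ hyw
  have hn₀ : n₀ ≤ m := Nat.find_min' hex (hm ▸ hyw)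
  exact ⟨m - n₀, by rw [← Function.iterate_add_apply, Nat.sub_add_cancel hn₀, hm]⟩

lemma lca_spec (x y : T.V) : lcaSpec x y (T.lca x y) :=
  Classical.epsilon_spec (lca_exists x y)

lemma lca_eq {x y v : T.V} (h : lcaSpec x y v) : T.lca x y = v := by
  have h' := lca_spec x y
  exact le_antisymm (h'.2.2 v h.1 h.2.1) (h.2.2 _ h'.1 h'.2.1)

lemma lca_comm (x y : T.V) : T.lca x y = T.lca y x := by
  have h := lca_spec y x
  exact lca_eq ⟨h.2.1, h.1, fun w h1 h2 => h.2.2 w h2 h1⟩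

lemma lca_self (x : T.V) : T.lca x x = x :=
  lca_eq ⟨le_refl x, le_refl x, fun w hw _ => hw⟩

end RTree

section KeyLemma

variable {L : Type} [Fintype L] [DecidableEq L]

open RTree in
lemma fitchEdgeSym_comm (T : LeafRTree L) (H : Set T.toRTree.V) (x y : L) :
    FitchEdgeSym T H x y ↔ FitchEdgeSym T H y x := by
  unfold FitchEdgeSym
  rw [RTree.lca_comm]
  constructor <;> rintro ⟨w, h1, h2, h3⟩ <;> exact ⟨w, h1, h2.symm, h3⟩

open RTree in
lemma fitch_key (T : LeafRTree L) (H : Set T.toRTree.V)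
    (x y z : L) (w : T.toRTree.V) (hwH : w ∈ H)
    (hxw : T.toRTree.le (T.emb x) w)
    (hlt : T.toRTree.lt w (T.toRTree.lca (T.emb x) (T.emb z))) :
    FitchEdgeSym T H x y ∨ FitchEdgeSym T H y z := by
  have hspecA := lca_spec (T := T.toRTree) (T.emb x) (T.emb y)
  have hspecZ := lca_spec (T := T.toRTree) (T.emb x) (T.emb z)
  by_cases hAw : T.toRTree.le (T.toRTree.lca (T.emb x) (T.emb y)) w
  · -- w is above lca(x,y): edge is on the path from y to z
    right
    have hyw : T.toRTree.le (T.emb y) w := le_trans hspecA.2.1 hAw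
    have hspecYZ := lca_spec (T := T.toRTree) (T.emb y) (T.emb z)
    have notle : ¬ T.toRTree.le (T.toRTree.lca (T.emb y) (T.emb z)) w := by
      intro h
      have h1 : T.toRTree.le (T.toRTree.lca (T.emb x) (T.emb z)) w :=
        hspecZ.2.2 w hxw (le_trans hspecYZ.2.1 h)
      exact hlt.2 (le_antisymm hlt.1 h1)
    have hcmp := chain (T := T.toRTree) hyw hspecYZ.1
    refine ⟨w, hwH, Or.inl hyw, hcmp.resolve_right notle, ?_⟩
    intro hEq
    apply notle
    rw [← hEq]
    exact ⟨0, rfl⟩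
  · -- w is strictly below lca(x,y): edge is on the path from x to y
    left
    have hcmp := chain (T := T.toRTree) hxw hspecA.1
    refine ⟨w, hwH, Or.inl hxw, hcmp.resolve_right hAw, ?_⟩
    intro hEq
    apply hAw
    rw [← hEq]
    exact ⟨0, rfl⟩

end KeyLemma

section Build

variable {L : Type} [Fintype L] [DecidableEq L] [Nonempty L]

/-- The tree realizing a complete multipartite graph: a root, one inner
vertex per class, and the leaves attached to the inner vertex of their
class. -/
noncomputable def buildTree (s : Setoid L) : LeafRTree L where
  V := Option (Quotient s ⊕ L)
  fintypeV := by classical exact inferInstance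
  decEqV := by classical exact inferInstance
  root := none
  parent v :=
    match v with
    | none => none
    | some (Sum.inl _) => none
    | some (Sum.inr x) => some (Sum.inl (Quotient.mk s x))
  parent_root := rfl
  reach v := ⟨2, by rcases v with _ | (q | x) <;> rfl⟩
  emb x := some (Sum.inr x)
  emb_inj a b h := by
    simpa using h
  emb_leaf v u hu := by
    rcases u with _ | (q | x) <;> simp_all [RTree.isLeaf]
  emb_surj l hl := by
    rcases l with _ | (q | x)
    · obtain ⟨q⟩ : Nonempty (Quotient s) := Nonempty.map (Quotient.mk s) ‹_›
      exact absurd (hl (some (Sum.inl q)) rfl) (by simp)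
    · obtain ⟨x, hx⟩ := Quotient.exists_rep q
      exact absurd (hl (some (Sum.inr x))
        (show some (Sum.inl (Quotient.mk s x)) = some (Sum.inl q) by rw [hx])) (by simp)
    · exact ⟨x, rfl⟩

namespace BuildTree

variable (s : Setoid L)

lemma parent_none : (buildTree s).toRTree.parent none = none := rfl

lemma le_none_iff (w : (buildTree s).toRTree.V) :
    (buildTree s).toRTree.le none w ↔ w = none := by
  constructor
  · rintro ⟨n, hn⟩
    rw [Function.iterate_fixed (parent_none s) n] at hn
    exact hn.symm
  · rintro rfl; exact ⟨0, rfl⟩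

lemma le_inl_iff (q : Quotient s) (w : (buildTree s).toRTree.V) :
    (buildTree s).toRTree.le (some (Sum.inl q)) w ↔
      w = some (Sum.inl q) ∨ w = none := by
  constructor
  · rintro ⟨n, hn⟩
    match n with
    | 0 => exact Or.inl hn.symm
    | n + 1 =>
      change (buildTree s).toRTree.parent^[n] none = w at hn
      rw [Function.iterate_fixed (parent_none s) n] at hn
      exact Or.inr hn.symm
  · rintro (rfl | rfl)
    · exact ⟨0, rfl⟩
    · exact ⟨1, rfl⟩

lemma le_inr_iff (x : L) (w : (buildTree s).toRTree.V) :
    (buildTree s).toRTree.le (some (Sum.inr x)) w ↔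
      w = some (Sum.inr x) ∨ w = some (Sum.inl (Quotient.mk s x)) ∨ w = none := by
  constructor
  · rintro ⟨n, hn⟩
    match n with
    | 0 => exact Or.inl hn.symm
    | 1 => exact Or.inr (Or.inl hn.symm)
    | n + 2 =>
      change (buildTree s).toRTree.parent^[n] none = w at hn
      rw [Function.iterate_fixed (parent_none s) n] at hn
      exact Or.inr (Or.inr hn.symm)
  · rintro (rfl | rfl | rfl)
    · exact ⟨0, rfl⟩
    · exact ⟨1, rfl⟩
    · exact ⟨2, rfl⟩

lemma lca_same {x y : L} (hxy : Quotient.mk s x = Quotient.mk s y) (hne : x ≠ y) :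
    (buildTree s).toRTree.lca ((buildTree s).emb x) ((buildTree s).emb y)
      = some (Sum.inl (Quotient.mk s x)) := by
  apply RTree.lca_eq
  refine ⟨⟨1, rfl⟩, ⟨1, show some (Sum.inl (Quotient.mk s y))
      = some (Sum.inl (Quotient.mk s x)) by rw [hxy]⟩, ?_⟩
  intro w hxw hyw
  rcases (le_inr_iff s x w).1 hxw with rfl | rfl | rfl
  · rcases (le_inr_iff s y _).1 hyw with h | h | h
    · exact absurd (Sum.inr.inj (Option.some.inj h)) hne
    · exact nomatch h
    · exact nomatch h
  · exact ⟨0, rfl⟩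
  · exact ⟨1, rfl⟩

lemma lca_diff {x y : L} (hxy : Quotient.mk s x ≠ Quotient.mk s y) :
    (buildTree s).toRTree.lca ((buildTree s).emb x) ((buildTree s).emb y) = none := by
  have hne : x ≠ y := fun h => hxy (by rw [h])
  apply RTree.lca_eq
  refine ⟨⟨2, rfl⟩, ⟨2, rfl⟩, ?_⟩
  intro w hxw hyw
  rcases (le_inr_iff s x w).1 hxw with rfl | rfl | rfl
  · rcases (le_inr_iff s y _).1 hyw with h | h | h
    · exact absurd (Sum.inr.inj (Option.some.inj h)) hne
    · exact nomatch h
    · exact nomatch h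
  · rcases (le_inr_iff s y _).1 hyw with h | h | h
    · exact nomatch h
    · exact absurd (Sum.inl.inj (Option.some.inj h)) hxy
    · exact nomatch h
  · exact ⟨0, rfl⟩

end BuildTree

end Build

/-- An undirected graph `G` is an undirected Fitch graph,
i.e. `G = 𝔉_sym(T,H)` for some rooted tree `T` with leaf set `V(G)` and some
`H ⊆ E(T)`, iff `G` is a complete multipartite graph (vertices can be
partitioned into classes such that two vertices are adjacent iff they lie in
different classes). -/
theorem undirected_fitch_iff_complete_multipartite
    {L : Type} [Fintype L] [DecidableEq L] [Nonempty L]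
    (G : SimpleGraph L) :
    (∃ (T : LeafRTree L) (H : Set T.toRTree.V),
        H ⊆ {v : T.toRTree.V | v ≠ T.toRTree.root} ∧
        ∀ x y : L, G.Adj x y ↔ x ≠ y ∧ FitchEdgeSym T H x y) ↔
    (∃ (ι : Type) (c : L → ι), ∀ x y : L, G.Adj x y ↔ c x ≠ c y) := by
  constructor
  · -- Fitch ⇒ complete multipartite
    rintro ⟨T, H, hH, hG⟩
    have trans : ∀ x y z : L, ¬ G.Adj x y → ¬ G.Adj y z → ¬ G.Adj x z := by
      intro x y z hxy hyz hxz
      by_cases hxy' : x = y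
      · exact hyz (hxy' ▸ hxz)
      by_cases hyz' : y = z
      · exact hxy (hyz' ▸ hxz)
      obtain ⟨hne, w, hwH, hle, hlt⟩ := (hG x z).1 hxz
      rcases hle with h | h
      · rcases fitch_key T H x y z w hwH h hlt with hf | hf
        · exact hxy ((hG x y).2 ⟨hxy', hf⟩)
        · exact hyz ((hG y z).2 ⟨hyz', hf⟩)
      · have hlt' : T.toRTree.lt w (T.toRTree.lca (T.emb z) (T.emb x)) := by
          rw [RTree.lca_comm (T.emb z) (T.emb x)]; exact hlt
        rcases fitch_key T H z y x w hwH h hlt' with hf | hf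
        · exact hyz ((hG y z).2 ⟨hyz', (fitchEdgeSym_comm T H z y).1 hf⟩)
        · exact hxy ((hG x y).2 ⟨hxy', (fitchEdgeSym_comm T H y x).1 hf⟩)
    let s : Setoid L := ⟨fun a b => ¬ G.Adj a b,
      ⟨fun a => G.loopless.irrefl a, fun h hadj => h hadj.symm,
        fun {a b c} h1 h2 => trans a b c h1 h2⟩⟩
    refine ⟨Quotient s, Quotient.mk s, fun x y => ?_⟩
    constructor
    · intro hadj heq
      exact Quotient.exact heq hadj
    · intro hne
      by_contra hnadj
      exact hne (Quotient.sound (hnadj : s.r x y))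
  · -- complete multipartite ⇒ Fitch
    rintro ⟨ι, c, hc⟩
    let s : Setoid L := ⟨fun a b => c a = c b, ⟨fun _ => rfl, Eq.symm, Eq.trans⟩⟩
    refine ⟨buildTree s, {v | ∃ q : Quotient s, v = some (Sum.inl q)}, ?_, ?_⟩
    · rintro v ⟨q, rfl⟩
      exact fun h => nomatch h
    · intro x y
      by_cases hcx : c x = c y
      · have hnadj : ¬ G.Adj x y := fun h => (hc x y).1 h hcx
        have hq : Quotient.mk s x = Quotient.mk s y := Quotient.sound (hcx : s.r x y)
        apply iff_of_false hnadj
        rintro ⟨hne, w, ⟨q, rfl⟩, hle, hlt⟩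
        rw [BuildTree.lca_same s hq hne] at hlt
        rcases (BuildTree.le_inl_iff s q _).1 hlt.1 with h | h
        · exact hlt.2 h.symm
        · exact nomatch h
      · have hq : Quotient.mk s x ≠ Quotient.mk s y :=
          fun h => hcx (Quotient.exact h : s.r x y)
        have hne : x ≠ y := fun h => hcx (h ▸ rfl)
        apply iff_of_true ((hc x y).2 hcx)
        refine ⟨hne, some (Sum.inl (Quotient.mk s x)), ⟨_, rfl⟩, Or.inl ⟨1, rfl⟩, ?_⟩
        rw [BuildTree.lca_diff s hq]
        exact ⟨⟨1, rfl⟩, fun h => nomatch h⟩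
end

section
/- For every relaxed σ-scenario 𝒮 = (T,S,μ,τ_T,τ_S,σ), the weak quasi-orthology graph Ψw(𝒮), the weak orthology graph Θw(𝒮), and the strict orthology graph Θs(𝒮) are cographs. -/
/-- The path in `T` between the leaves `x` and `y` contains an HGT-edge of
the scenario (edges are identified with their child endpoints `w`; the edges
of the path between `x` and `y` are those with `x ⪯ w` or `y ⪯ w`, and
`w ≺ lca_T(x,y)`; such an edge is an HGT-edge if the images under `μ` of its
endpoints are `⪯_S`-incomparable). -/
def PathHGT (T S : PPTree) (μ : T.V → S.VE) (x y : T.V) : Prop :=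
  ∃ w : T.V, (T.le x w ∨ T.le y w) ∧ T.lt w (T.lca x y) ∧
    ¬ S.cmpVE (μ (T.parent w)) (μ w)

/-- `x` and `y` are weak quasi-orthologs: `μ(lca_T(x,y)) ∈ V⁰(S)`. -/
def WeakQuasiOrtholog (T S : PPTree) (μ : T.V → S.VE) (x y : T.V) : Prop :=
  T.isLeaf x ∧ T.isLeaf y ∧ x ≠ y ∧
    ∃ v : S.V, μ (T.lca x y) = Sum.inl v ∧ v ≠ S.root ∧ ¬ S.isLeaf v

/-- `x` and `y` are weak orthologs: weak quasi-orthologs such that no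
HGT-edge lies on the path between `x` and `y`. -/
def WeakOrtholog (T S : PPTree) (μ : T.V → S.VE) (x y : T.V) : Prop :=
  WeakQuasiOrtholog T S μ x y ∧ ¬ PathHGT T S μ x y

/-- `x` and `y` are strict quasi-orthologs:
`μ(lca_T(x,y)) = lca_S(σ(x),σ(y))`. -/
def StrictQuasiOrtholog (T S : PPTree) (μ : T.V → S.VE) (σ : T.V → S.V)
    (x y : T.V) : Prop :=
  T.isLeaf x ∧ T.isLeaf y ∧ x ≠ y ∧
    μ (T.lca x y) = Sum.inl (S.lca (σ x) (σ y))

/-- `x` and `y` are strict orthologs: strict quasi-orthologs such that no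
HGT-edge lies on the path between `x` and `y`. -/
def StrictOrtholog (T S : PPTree) (μ : T.V → S.VE) (σ : T.V → S.V)
    (x y : T.V) : Prop :=
  StrictQuasiOrtholog T S μ σ x y ∧ ¬ PathHGT T S μ x y

/-- An adjacency predicate `P` on the leaves of `T` is a cograph: there is no
induced path `P₄` on four (pairwise distinct) leaves. -/
def IsCographOnLeaves (T : PPTree) (P : T.V → T.V → Prop) : Prop :=
  ¬ ∃ a b c d : T.V,
      T.isLeaf a ∧ T.isLeaf b ∧ T.isLeaf c ∧ T.isLeaf d ∧
      a ≠ b ∧ a ≠ c ∧ a ≠ d ∧ b ≠ c ∧ b ≠ d ∧ c ≠ d ∧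
      P a b ∧ P b c ∧ P c d ∧ ¬ P a c ∧ ¬ P a d ∧ ¬ P b d


/-! ### Auxiliary lemmas -/

namespace P18

open PPTree

variable {T : PPTree}

theorem le_refl' (x : T.V) : T.le x x := ⟨0, rfl⟩

theorem le_trans' {x y z : T.V} (h1 : T.le x y) (h2 : T.le y z) : T.le x z := by
  obtain ⟨n, hn⟩ := h1; obtain ⟨m, hm⟩ := h2
  exact ⟨m + n, by rw [Function.iterate_add_apply, hn, hm]⟩

theorem iterate_root (n : ℕ) : T.parent^[n] T.root = T.root := by
  induction n with
  | zero => rfl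
  | succ n ih => rw [Function.iterate_succ_apply', ih, T.parent_root]

theorem le_root' (x : T.V) : T.le x T.root := T.reach x

theorem period {x : T.V} {k : ℕ} (h : T.parent^[k] x = x) (j : ℕ) :
    T.parent^[j * k] x = x := by
  induction j with
  | zero => simp
  | succ j ih => rw [Nat.succ_mul, Function.iterate_add_apply, h, ih]

theorem le_antisymm' {x y : T.V} (hxy : T.le x y) (hyx : T.le y x) : x = y := by
  obtain ⟨n, hn⟩ := hxy
  obtain ⟨m, hm⟩ := hyx
  rcases Nat.eq_zero_or_pos (m + n) with h0 | hpos
  · have hn0 : n = 0 := by omega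
    rw [hn0] at hn; exact hn
  · have hcyc : T.parent^[m + n] x = x := by
      rw [Function.iterate_add_apply, hn, hm]
    obtain ⟨k, hk⟩ := T.reach x
    have h1 := period hcyc (k + 1)
    have hge : k ≤ (k + 1) * (m + n) := le_trans (Nat.le_succ k)
      (Nat.le_mul_of_pos_right _ hpos)
    have h2 : T.parent^[(k+1)*(m+n)] x = T.root := by
      have he : (k+1)*(m+n) = ((k+1)*(m+n) - k) + k := by omega
      rw [he, Function.iterate_add_apply, hk, iterate_root]
    have hroot : x = T.root := by rw [← h1, h2]
    subst hroot
    rw [iterate_root] at hn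
    exact hn

theorem anc_comparable {x y z : T.V} (hy : T.le x y) (hz : T.le x z) :
    T.le y z ∨ T.le z y := by
  obtain ⟨n, hn⟩ := hy; obtain ⟨m, hm⟩ := hz
  rcases Nat.le_total n m with h | h
  · left
    exact ⟨m - n, by rw [← hn, ← Function.iterate_add_apply, Nat.sub_add_cancel h]; exact hm⟩
  · right
    exact ⟨n - m, by rw [← hm, ← Function.iterate_add_apply, Nat.sub_add_cancel h]; exact hn⟩

theorem lca_exists (x y : T.V) :
    ∃ v, T.le x v ∧ T.le y v ∧ ∀ w, T.le x w → T.le y w → T.le v w := by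
  classical
  have hP : ∃ n, T.le y (T.parent^[n] x) := by
    obtain ⟨k, hk⟩ := T.reach x
    exact ⟨k, by rw [hk]; exact le_root' y⟩
  refine ⟨T.parent^[Nat.find hP] x, ⟨Nat.find hP, rfl⟩, Nat.find_spec hP, ?_⟩
  rintro w ⟨m, hm⟩ hyw
  have hle : Nat.find hP ≤ m := Nat.find_min' hP (by rw [hm]; exact hyw)
  exact ⟨m - Nat.find hP, by
    rw [← Function.iterate_add_apply, Nat.sub_add_cancel hle]; exact hm⟩

theorem lca_spec (x y : T.V) :
    T.le x (T.lca x y) ∧ T.le y (T.lca x y) ∧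
      ∀ w, T.le x w → T.le y w → T.le (T.lca x y) w :=
  Classical.epsilon_spec (lca_exists x y)

theorem lca_le_left (x y : T.V) : T.le x (T.lca x y) := (lca_spec x y).1
theorem lca_le_right (x y : T.V) : T.le y (T.lca x y) := (lca_spec x y).2.1
theorem lca_min {x y : T.V} (w : T.V) (hx : T.le x w) (hy : T.le y w) :
    T.le (T.lca x y) w := (lca_spec x y).2.2 w hx hy

theorem lca_symm (x y : T.V) : T.lca x y = T.lca y x :=
  le_antisymm' (lca_min _ (lca_le_right y x) (lca_le_left y x))
    (lca_min _ (lca_le_right x y) (lca_le_left x y))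

theorem factB {x y z : T.V} (h : T.le (T.lca x y) (T.lca y z))
    (hne : T.lca x y ≠ T.lca y z) : T.lca x z = T.lca y z := by
  have hw_le : T.le (T.lca x z) (T.lca y z) :=
    lca_min _ (le_trans' (lca_le_left x y) h) (lca_le_right y z)
  rcases anc_comparable (lca_le_left x z) (lca_le_left x y) with hc | hc
  · exfalso
    apply hne
    apply le_antisymm' h
    exact lca_min _ (lca_le_right x y) (le_trans' (lca_le_right x z) hc)
  · apply le_antisymm' hw_le
    exact lca_min _ (le_trans' (lca_le_right x y) hc) (lca_le_right x z)

theorem c2 {a b c d u : T.V} (h1 : T.lca a b = u) (h2 : T.lca b c = u)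
    (h3 : T.lca c d = u) :
    T.lca a c = u ∨ T.lca b d = u ∨ T.lca a d = u := by
  have hau : T.le a u := h1 ▸ lca_le_left a b
  have hbu : T.le b u := h1 ▸ lca_le_right a b
  have hcu : T.le c u := h2 ▸ lca_le_right b c
  have hdu : T.le d u := h3 ▸ lca_le_right c d
  have hpu : T.le (T.lca a c) u := lca_min _ hau hcu
  have hqu : T.le (T.lca b d) u := lca_min _ hbu hdu
  have hru : T.le (T.lca a d) u := lca_min _ hau hdu
  by_cases hpr : T.le (T.lca a c) (T.lca a d)
  · by_cases hqr : T.le (T.lca b d) (T.lca a d)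
    · right; right
      apply le_antisymm' hru
      rw [← h1]
      exact lca_min _ (le_trans' (lca_le_left a c) hpr)
        (le_trans' (lca_le_left b d) hqr)
    · right; left
      rcases anc_comparable (lca_le_right b d) (lca_le_right a d) with hc | hc
      · exact absurd hc hqr
      · apply le_antisymm' hqu
        rw [← h1]
        exact lca_min _ (le_trans' (lca_le_left a d) hc) (lca_le_left b d)
  · left
    rcases anc_comparable (lca_le_left a c) (lca_le_left a d) with hc | hc
    · exact absurd hc hpr
    · apply le_antisymm' hpu
      rw [← h3]
      exact lca_min _ (lca_le_right a c) (le_trans' (lca_le_right a d) hc)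

theorem p4lca (t : T.V → Prop) {a b c d : T.V}
    (h1 : t (T.lca a b)) (h2 : t (T.lca b c)) (h3 : t (T.lca c d))
    (h4 : ¬ t (T.lca a c)) (h5 : ¬ t (T.lca a d)) (h6 : ¬ t (T.lca b d)) :
    False := by
  have h12 : T.lca a b = T.lca b c := by
    rcases anc_comparable (lca_le_right a b) (lca_le_left b c) with hc | hc
    · by_cases he : T.lca a b = T.lca b c
      · exact he
      · exact absurd (factB hc he ▸ h2) h4
    · by_cases he : T.lca b c = T.lca a b
      · exact he.symm
      · exfalso
        have hc' : T.le (T.lca c b) (T.lca b a) := by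
          rw [lca_symm c b, lca_symm b a]; exact hc
        have hne' : T.lca c b ≠ T.lca b a := by
          rw [lca_symm c b, lca_symm b a]; exact he
        have := factB hc' hne'
        rw [lca_symm c a, lca_symm b a] at this
        exact h4 (this ▸ h1)
  have h23 : T.lca b c = T.lca c d := by
    rcases anc_comparable (lca_le_right b c) (lca_le_left c d) with hc | hc
    · by_cases he : T.lca b c = T.lca c d
      · exact he
      · exact absurd (factB hc he ▸ h3) h6
    · by_cases he : T.lca c d = T.lca b c
      · exact he.symm
      · exfalso
        have hc' : T.le (T.lca d c) (T.lca c b) := by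
          rw [lca_symm d c, lca_symm c b]; exact hc
        have hne' : T.lca d c ≠ T.lca c b := by
          rw [lca_symm d c, lca_symm c b]; exact he
        have := factB hc' hne'
        rw [lca_symm d b, lca_symm c b] at this
        exact h6 (this ▸ h2)
  rcases c2 rfl h12.symm (h12.trans h23).symm with h | h | h
  · exact h4 (h ▸ h1)
  · exact h6 (h ▸ h1)
  · exact h5 (h ▸ h1)

theorem le_parent_self (x : T.V) : T.le x (T.parent x) := ⟨1, rfl⟩

theorem le_parent_of_ne {x y : T.V} (h : T.le x y) (hne : x ≠ y) :
    T.le (T.parent x) y := by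
  obtain ⟨n, hn⟩ := h
  cases n with
  | zero => exact absurd hn hne
  | succ n => exact ⟨n, by rw [← Function.iterate_succ_apply]; exact hn⟩

theorem eq_root_of_parent_eq {v : T.V} (h : T.parent v = v) : v = T.root := by
  obtain ⟨k, hk⟩ := T.reach v
  have hfix : ∀ k, T.parent^[k] v = v := by
    intro k
    induction k with
    | zero => rfl
    | succ k ih => rw [Function.iterate_succ_apply, h, ih]
  rw [hfix k] at hk
  exact hk

theorem parent_rho : T.parent T.rho = T.root := T.planted.choose_spec.1.2

theorem root_not_leaf : ¬ T.isLeaf T.root := fun h =>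
  T.rho_ne_root (h T.rho parent_rho)

theorem leaf_ne_root {x : T.V} (h : T.isLeaf x) : x ≠ T.root := by
  intro he; subst he; exact root_not_leaf h

theorem le_rho_of_ne_root {x : T.V} (h : x ≠ T.root) : T.le x T.rho := by
  classical
  have hP : ∃ n, T.parent^[n] x = T.root := T.reach x
  have hpos : 0 < Nat.find hP := by
    rcases Nat.eq_zero_or_pos (Nat.find hP) with h0 | h0
    · exact absurd (by have := Nat.find_spec hP; rwa [h0] at this) h
    · exact h0
  obtain ⟨m, hm⟩ : ∃ m, Nat.find hP = m + 1 := ⟨Nat.find hP - 1, by omega⟩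
  have hspec := Nat.find_spec hP
  rw [hm, Function.iterate_succ_apply'] at hspec
  have hc2 : T.parent^[m] x ≠ T.root := Nat.find_min hP (by omega)
  have := T.planted.unique ⟨hc2, hspec⟩ ⟨T.rho_ne_root, parent_rho⟩
  exact ⟨m, this⟩

theorem lca_ne_root {a b : T.V} (ha : a ≠ T.root) (hb : b ≠ T.root) :
    T.lca a b ≠ T.root := by
  intro he
  apply T.rho_ne_root
  apply le_antisymm' (le_root' _)
  rw [← he]
  exact lca_min _ (le_rho_of_ne_root ha) (le_rho_of_ne_root hb)

theorem leVE_refl (α : T.VE) : T.leVE α α := by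
  cases α with
  | inl v => exact le_refl' v
  | inr e => exact le_refl' e.1

theorem leVE_trans {α β γ : T.VE} (h1 : T.leVE α β) (h2 : T.leVE β γ) :
    T.leVE α γ := by
  cases α with
  | inl x =>
    cases β with
    | inl y =>
      cases γ with
      | inl z => exact le_trans' h1 h2
      | inr f => exact le_trans' h1 h2
    | inr e =>
      cases γ with
      | inl z =>
        exact le_trans' (h1 : T.le x e.1)
          (le_trans' (le_parent_self e.1) (h2 : T.le (T.parent e.1) z))
      | inr f => exact le_trans' h1 h2
  | inr e =>
    cases β with
    | inl y =>
      cases γ with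
      | inl z => exact le_trans' h1 h2
      | inr f =>
        exact le_trans' (le_parent_self e.1)
          (le_trans' (h1 : T.le (T.parent e.1) y) (h2 : T.le y f.1))
    | inr f =>
      cases γ with
      | inl z =>
        by_cases he : e.1 = f.1
        · rw [PPTree.leVE, he]; exact h2
        · exact le_trans' (le_parent_of_ne (h1 : T.le e.1 f.1) he)
            (le_trans' (le_parent_self f.1) (h2 : T.le (T.parent f.1) z))
      | inr g => exact le_trans' h1 h2

variable {S : PPTree}

theorem slem {x y z m : S.V} (h1 : S.le (S.lca x y) m) (h2 : S.lca x y ≠ m)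
    (h3 : S.lca y z = m) (h4 : S.le z m) : S.lca x z = m := by
  rcases anc_comparable (lca_le_left x z) (lca_le_left x y) with hc | hc
  · exfalso
    apply h2
    apply le_antisymm' h1
    rw [← h3]
    apply le_trans' (lca_min _ (lca_le_right x y) (le_trans' (lca_le_right x z) hc))
    exact le_refl' _
  · apply le_antisymm'
    · exact lca_min _ (le_trans' (lca_le_left x y) h1) h4
    · rw [← h3]
      exact lca_min _ (le_trans' (lca_le_right x y) hc) (lca_le_right x z)

theorem path_triple {μ : T.V → S.VE} {a b c : T.V}
    (h : PathHGT T S μ a c) : PathHGT T S μ a b ∨ PathHGT T S μ b c := by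
  obtain ⟨w, hw, hlt, hncmp⟩ := h
  have hwac : ¬ T.le (T.lca a c) w := by
    intro hle
    exact hlt.2 (le_antisymm' hlt.1 hle)
  rcases hw with haw | hcw
  · by_cases hwb : T.le (T.lca a b) w
    · right
      have hbw : T.le b w := le_trans' (lca_le_right a b) hwb
      have hnbc : ¬ T.le (T.lca b c) w := by
        intro hle
        exact hwac (lca_min _ haw (le_trans' (lca_le_right b c) hle))
      rcases anc_comparable hbw (lca_le_left b c) with hc | hc
      · exact ⟨w, Or.inl hbw, ⟨hc, fun e => hnbc (e ▸ le_refl' w)⟩, hncmp⟩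
      · exact absurd hc hnbc
    · left
      rcases anc_comparable haw (lca_le_left a b) with hc | hc
      · exact ⟨w, Or.inl haw, ⟨hc, fun e => hwb (e ▸ le_refl' w)⟩, hncmp⟩
      · exact absurd hc hwb
  · by_cases hwb : T.le (T.lca b c) w
    · left
      have hbw : T.le b w := le_trans' (lca_le_left b c) hwb
      have hnab : ¬ T.le (T.lca a b) w := by
        intro hle
        exact hwac (lca_min _ (le_trans' (lca_le_left a b) hle) hcw)
      rcases anc_comparable hbw (lca_le_right a b) with hc | hc
      · exact ⟨w, Or.inr hbw, ⟨hc, fun e => hnab (e ▸ le_refl' w)⟩, hncmp⟩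
      · exact absurd hc hnab
    · right
      rcases anc_comparable hcw (lca_le_right b c) with hc | hc
      · exact ⟨w, Or.inr hcw, ⟨hc, fun e => hwb (e ▸ le_refl' w)⟩, hncmp⟩
      · exact absurd hc hwb

theorem timeS_mono {τS : S.V → ℝ} (ht : IsTimeMap S τS) {v w : S.V}
    (h : S.le v w) : τS v ≤ τS w := by
  by_cases he : v = w
  · rw [he]
  · exact le_of_lt (ht v w ⟨h, he⟩)

theorem step {μ : T.V → S.VE} {τT : T.V → ℝ} {τS : S.V → ℝ}
    (hsc : IsRelaxedScenario T S μ τT τS) {w p : T.V} (hlt : T.lt w p)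
    (hcmp : S.cmpVE (μ p) (μ w)) : S.leVE (μ w) (μ p) := by
  rcases hcmp with h | h
  swap
  · exact h
  by_cases heq : μ p = μ w
  · rw [heq]; exact leVE_refl _
  exfalso
  have hT : τT w < τT p := hsc.timeT w p hlt
  have key : τT p < τT w := by
    cases hp : μ p with
    | inl v =>
      cases hw : μ w with
      | inl v' =>
        rw [hp, hw] at h heq
        have h' : S.le v v' := h
        have hne : v ≠ v' := fun e => heq (by rw [e])
        have := hsc.timeS v v' ⟨h', hne⟩
        rw [hsc.S2 p v hp, hsc.S2 w v' hw] at this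
        exact this
      | inr f =>
        rw [hp, hw] at h
        have h' : S.le v f.1 := h
        have h3 := (hsc.S3 w f hw).1
        have hm := timeS_mono hsc.timeS h'
        rw [hsc.S2 p v hp] at hm
        linarith
    | inr e =>
      cases hw : μ w with
      | inl v' =>
        rw [hp, hw] at h
        have h' : S.le (S.parent e.1) v' := h
        have h3 := (hsc.S3 p e hp).2
        have hm := timeS_mono hsc.timeS h'
        rw [hsc.S2 w v' hw] at hm
        linarith
      | inr f =>
        rw [hp, hw] at h heq
        have h' : S.le e.1 f.1 := h
        have hef : e.1 ≠ f.1 := fun h1 => heq (by rw [Subtype.ext h1])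
        have h'' : S.le (S.parent e.1) f.1 := le_parent_of_ne h' hef
        have h3p := (hsc.S3 p e hp).2
        have h3w := (hsc.S3 w f hw).1
        have hm := timeS_mono hsc.timeS h''
        linarith
  linarith

theorem chain {μ : T.V → S.VE} {τT : T.V → ℝ} {τS : S.V → ℝ}
    (hsc : IsRelaxedScenario T S μ τT τS) {x u : T.V} (hxu : T.le x u)
    (hfree : ∀ w, T.le x w → T.lt w u → S.cmpVE (μ (T.parent w)) (μ w)) :
    S.leVE (μ x) (μ u) := by
  classical
  have hP : ∃ n, T.parent^[n] x = u := hxu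
  have key : ∀ k, k ≤ Nat.find hP → S.leVE (μ x) (μ (T.parent^[k] x)) := by
    intro k
    induction k with
    | zero => intro _; exact leVE_refl _
    | succ k ih =>
      intro hk
      have hkn : k < Nat.find hP := by omega
      have hle := ih (by omega)
      have hwu_ne : T.parent^[k] x ≠ u := Nat.find_min hP hkn
      have hwu_le : T.le (T.parent^[k] x) u := ⟨Nat.find hP - k, by
        rw [← Function.iterate_add_apply, Nat.sub_add_cancel (le_of_lt hkn)]
        exact Nat.find_spec hP⟩
      have hcmp := hfree (T.parent^[k] x) ⟨k, rfl⟩ ⟨hwu_le, hwu_ne⟩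
      have hwroot : T.parent^[k] x ≠ T.root := by
        intro he
        apply hwu_ne
        obtain ⟨j, hj⟩ := hwu_le
        rw [he, iterate_root] at hj
        rw [he, ← hj]
      have hpw : T.lt (T.parent^[k] x) (T.parent (T.parent^[k] x)) :=
        ⟨le_parent_self _, fun he => hwroot (eq_root_of_parent_eq he.symm)⟩
      have hstep := step hsc hpw hcmp
      rw [Function.iterate_succ_apply']
      exact leVE_trans hle hstep
  have hfin := key (Nat.find hP) le_rfl
  rw [Nat.find_spec hP] at hfin
  exact hfin

theorem mu_target {μ : T.V → S.VE} {r : T.V} {z1 z2 m : S.V}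
    (hm : m ≠ S.root)
    (hmin : ∀ w, S.le z1 w → S.le z2 w → S.le m w)
    (h1 : S.leVE (Sum.inl z1) (μ r)) (h2 : S.leVE (Sum.inl z2) (μ r))
    (h3 : S.leVE (μ r) (Sum.inl m)) : μ r = Sum.inl m := by
  cases hr : μ r with
  | inl z =>
    rw [hr] at h1 h2 h3
    have : z = m := le_antisymm' (h3 : S.le z m) (hmin z h1 h2)
    rw [this]
  | inr e =>
    exfalso
    rw [hr] at h1 h2 h3
    have h3' : S.le (S.parent e.1) m := h3
    have he1 : S.le m e.1 := hmin e.1 h1 h2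
    have he2 : S.le e.1 m := le_trans' (le_parent_self e.1) h3'
    have hem : e.1 = m := le_antisymm' he2 he1
    rw [hem] at h3'
    exact hm (eq_root_of_parent_eq (le_antisymm' h3' (le_parent_self m)))

theorem stage1 {μ : T.V → S.VE} {τT : T.V → ℝ} {τS : S.V → ℝ} {σ : T.V → S.V}
    (hsc : IsRelaxedScenario T S μ τT τS) {a b c : T.V}
    (Eab : μ (T.lca a b) = Sum.inl (S.lca (σ a) (σ b)))
    (Ebc : μ (T.lca b c) = Sum.inl (S.lca (σ b) (σ c)))
    (Nac : μ (T.lca a c) ≠ Sum.inl (S.lca (σ a) (σ c)))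
    (nPac : ¬ PathHGT T S μ a c) : T.lca a b = T.lca b c := by
  rcases anc_comparable (lca_le_right a b) (lca_le_left b c) with hc | hc
  · by_cases he : T.lca a b = T.lca b c
    · exact he
    exfalso
    have hlcaac : T.lca a c = T.lca b c := factB hc he
    have hchain : S.leVE (μ (T.lca a b)) (μ (T.lca b c)) := by
      apply chain hsc hc
      intro w hw hwlt
      by_contra hn
      exact nPac ⟨w, Or.inl (le_trans' (lca_le_left a b) hw),
        by rw [hlcaac]; exact hwlt, hn⟩
    rw [Eab, Ebc] at hchain
    have hle_m : S.le (S.lca (σ a) (σ b)) (S.lca (σ b) (σ c)) := hchain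
    have hneq : S.lca (σ a) (σ b) ≠ S.lca (σ b) (σ c) := by
      intro e
      have t1 := hsc.S2 _ _ Eab
      have t2 := hsc.S2 _ _ Ebc
      rw [e] at t1
      have := hsc.timeT _ _ (⟨hc, he⟩ : T.lt (T.lca a b) (T.lca b c))
      linarith
    have hLac_ne : S.lca (σ a) (σ c) ≠ S.lca (σ b) (σ c) := by
      intro e
      apply Nac
      rw [hlcaac, Ebc, e]
    have hLac_le : S.le (S.lca (σ a) (σ c)) (S.lca (σ b) (σ c)) :=
      lca_min _ (le_trans' (lca_le_left (σ a) (σ b)) hle_m)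
        (lca_le_right (σ b) (σ c))
    rcases anc_comparable (lca_le_left (σ a) (σ c)) (lca_le_left (σ a) (σ b))
      with hc2 | hc2
    · exact hneq (le_antisymm' hle_m (lca_min _ (lca_le_right (σ a) (σ b))
        (le_trans' (lca_le_right (σ a) (σ c)) hc2)))
    · exact hLac_ne (le_antisymm' hLac_le
        (lca_min _ (le_trans' (lca_le_right (σ a) (σ b)) hc2)
          (lca_le_right (σ a) (σ c))))
  · by_cases he : T.lca b c = T.lca a b
    · exact he.symm
    exfalso
    have hlcaac : T.lca a c = T.lca a b := by
      have h' : T.le (T.lca c b) (T.lca b a) := by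
        rw [lca_symm c b, lca_symm b a]; exact hc
      have hne' : T.lca c b ≠ T.lca b a := by
        rw [lca_symm c b, lca_symm b a]; exact he
      have hres := factB h' hne'
      rw [lca_symm c a, lca_symm b a] at hres
      exact hres
    have hchain : S.leVE (μ (T.lca b c)) (μ (T.lca a b)) := by
      apply chain hsc hc
      intro w hw hwlt
      by_contra hn
      exact nPac ⟨w, Or.inr (le_trans' (lca_le_right b c) hw),
        by rw [hlcaac]; exact hwlt, hn⟩
    rw [Eab, Ebc] at hchain
    have hle_m : S.le (S.lca (σ b) (σ c)) (S.lca (σ a) (σ b)) := hchain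
    have hneq : S.lca (σ b) (σ c) ≠ S.lca (σ a) (σ b) := by
      intro e
      have t1 := hsc.S2 _ _ Ebc
      have t2 := hsc.S2 _ _ Eab
      rw [e] at t1
      have := hsc.timeT _ _ (⟨hc, he⟩ : T.lt (T.lca b c) (T.lca a b))
      linarith
    have hLac_ne : S.lca (σ a) (σ c) ≠ S.lca (σ a) (σ b) := by
      intro e
      apply Nac
      rw [hlcaac, Eab, e]
    have hLac_le : S.le (S.lca (σ a) (σ c)) (S.lca (σ a) (σ b)) :=
      lca_min _ (lca_le_left (σ a) (σ b))
        (le_trans' (lca_le_right (σ b) (σ c)) hle_m)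
    rcases anc_comparable (lca_le_right (σ a) (σ c)) (lca_le_right (σ b) (σ c))
      with hc2 | hc2
    · exact hneq (le_antisymm' hle_m
        (lca_min _ (le_trans' (lca_le_left (σ a) (σ c)) hc2)
          (lca_le_left (σ b) (σ c))))
    · exact hLac_ne (le_antisymm' hLac_le
        (lca_min _ (lca_le_left (σ a) (σ c))
          (le_trans' (lca_le_left (σ b) (σ c)) hc2)))

theorem stage2 {μ : T.V → S.VE} {τT : T.V → ℝ} {τS : S.V → ℝ} {σ : T.V → S.V}
    (hsc : IsRelaxedScenario T S μ τT τS) (hσ : SigmaCompat T S μ σ)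
    {a b c d : T.V} {u : T.V} {m : S.V}
    (la : T.isLeaf a) (lb : T.isLeaf b) (lc : T.isLeaf c) (ld : T.isLeaf d)
    (hu1 : T.lca a b = u) (hu2 : T.lca b c = u) (hu3 : T.lca c d = u)
    (Em : μ u = Sum.inl m)
    (hmab : S.lca (σ a) (σ b) = m) (hmbc : S.lca (σ b) (σ c) = m)
    (hmcd : S.lca (σ c) (σ d) = m)
    (Nac : μ (T.lca a c) ≠ Sum.inl (S.lca (σ a) (σ c)))
    (Nad : μ (T.lca a d) ≠ Sum.inl (S.lca (σ a) (σ d)))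
    (Nbd : μ (T.lca b d) ≠ Sum.inl (S.lca (σ b) (σ d)))
    (nPab : ¬ PathHGT T S μ a b) (nPac : ¬ PathHGT T S μ a c)
    (nPad : ¬ PathHGT T S μ a d) : False := by
  have hau : T.le a u := hu1 ▸ lca_le_left a b
  have hbu : T.le b u := hu1 ▸ lca_le_right a b
  have hcu : T.le c u := hu2 ▸ lca_le_right b c
  have hdu : T.le d u := hu3 ▸ lca_le_right c d
  have hAm : S.le (σ a) m := hmab ▸ lca_le_left (σ a) (σ b)
  have hBm : S.le (σ b) m := hmab ▸ lca_le_right (σ a) (σ b)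
  have hCm : S.le (σ c) m := hmbc ▸ lca_le_right (σ b) (σ c)
  have hDm : S.le (σ d) m := hmcd ▸ lca_le_right (σ c) (σ d)
  have hu_ne_root : u ≠ T.root :=
    hu1 ▸ lca_ne_root (leaf_ne_root la) (leaf_ne_root lb)
  have hm_ne_root : m ≠ S.root := by
    intro e
    exact hu_ne_root ((hsc.S0 u).1 (by rw [Em, e]))
  have mono : ∀ x y : T.V, T.isLeaf x → ¬ PathHGT T S μ x y →
      S.leVE (Sum.inl (σ x)) (μ (T.lca x y)) := by
    intro x y hx hnp
    have hch := chain hsc (lca_le_left x y) (fun w hw hwlt => by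
      by_contra hn
      exact hnp ⟨w, Or.inl hw, hwlt, hn⟩)
    rwa [hσ x hx] at hch
  have mono' : ∀ x y : T.V, T.isLeaf y → ¬ PathHGT T S μ x y →
      S.leVE (Sum.inl (σ y)) (μ (T.lca x y)) := by
    intro x y hy hnp
    have hch := chain hsc (lca_le_right x y) (fun w hw hwlt => by
      by_contra hn
      exact hnp ⟨w, Or.inr hw, hwlt, hn⟩)
    rwa [hσ y hy] at hch
  have chainU : ∀ r : T.V, T.le r u → T.le a r → S.leVE (μ r) (Sum.inl m) := by
    intro r hru har
    have hch := chain hsc hru (fun w hw hwlt => by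
      by_contra hn
      refine nPab ⟨w, Or.inl (le_trans' har hw), ?_, hn⟩
      rw [hu1]; exact hwlt)
    rwa [Em] at hch
  have ENDad : S.lca (σ a) (σ d) = m → False := by
    intro hLad
    have h1 : S.leVE (Sum.inl (σ a)) (μ (T.lca a d)) := mono a d la nPad
    have h2 : S.leVE (Sum.inl (σ d)) (μ (T.lca a d)) := mono' a d ld nPad
    have h3 : S.leVE (μ (T.lca a d)) (Sum.inl m) :=
      chainU (T.lca a d) (lca_min _ hau hdu) (lca_le_left a d)
    have hmin : ∀ w, S.le (σ a) w → S.le (σ d) w → S.le m w := by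
      intro w hw1 hw2
      rw [← hLad]
      exact lca_min _ hw1 hw2
    exact Nad (by rw [mu_target hm_ne_root hmin h1 h2 h3, hLad])
  have ENDac : S.lca (σ a) (σ c) = m → False := by
    intro hLac
    have h1 : S.leVE (Sum.inl (σ a)) (μ (T.lca a c)) := mono a c la nPac
    have h2 : S.leVE (Sum.inl (σ c)) (μ (T.lca a c)) := mono' a c lc nPac
    have h3 : S.leVE (μ (T.lca a c)) (Sum.inl m) :=
      chainU (T.lca a c) (lca_min _ hau hcu) (lca_le_left a c)
    have hmin : ∀ w, S.le (σ a) w → S.le (σ c) w → S.le m w := by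
      intro w hw1 hw2
      rw [← hLac]
      exact lca_min _ hw1 hw2
    exact Nac (by rw [mu_target hm_ne_root hmin h1 h2 h3, hLac])
  rcases c2 hu1 hu2 hu3 with hp | hq | hr
  · have hne : S.lca (σ a) (σ c) ≠ m := by
      intro e
      exact Nac (by rw [hp, Em, e])
    have hle : S.le (S.lca (σ a) (σ c)) m := lca_min _ hAm hCm
    exact ENDad (slem hle hne hmcd hDm)
  · have hne : S.lca (σ b) (σ d) ≠ m := by
      intro e
      exact Nbd (by rw [hq, Em, e])
    have hle : S.le (S.lca (σ b) (σ d)) m := lca_min _ hBm hDm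
    have h3' : S.lca (σ b) (σ a) = m := by rw [lca_symm]; exact hmab
    have hda := slem (x := σ d) (y := σ b) (z := σ a)
      (by rw [lca_symm (σ d) (σ b)]; exact hle)
      (by rw [lca_symm (σ d) (σ b)]; exact hne) h3' hAm
    exact ENDad (by rw [lca_symm]; exact hda)
  · have hne : S.lca (σ a) (σ d) ≠ m := by
      intro e
      exact Nad (by rw [hr, Em, e])
    have hle : S.le (S.lca (σ a) (σ d)) m := lca_min _ hAm hDm
    have h3' : S.lca (σ d) (σ c) = m := by rw [lca_symm]; exact hmcd
    exact ENDac (slem hle hne h3' hCm)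

theorem strict_p4 {μ : T.V → S.VE} {τT : T.V → ℝ} {τS : S.V → ℝ} {σ : T.V → S.V}
    (hsc : IsRelaxedScenario T S μ τT τS) (hσ : SigmaCompat T S μ σ)
    {a b c d : T.V}
    (la : T.isLeaf a) (lb : T.isLeaf b) (lc : T.isLeaf c) (ld : T.isLeaf d)
    (pab : StrictOrtholog T S μ σ a b) (pbc : StrictOrtholog T S μ σ b c)
    (pcd : StrictOrtholog T S μ σ c d)
    (nac : ¬ StrictOrtholog T S μ σ a c) (nad : ¬ StrictOrtholog T S μ σ a d)
    (nbd : ¬ StrictOrtholog T S μ σ b d)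
    (dac : a ≠ c) (dad : a ≠ d) (dbd : b ≠ d) : False := by
  have nPab := pab.2
  have nPbc := pbc.2
  have nPcd := pcd.2
  have nPac : ¬ PathHGT T S μ a c := fun h => (path_triple h).elim nPab nPbc
  have nPbd : ¬ PathHGT T S μ b d := fun h => (path_triple h).elim nPbc nPcd
  have nPad : ¬ PathHGT T S μ a d := fun h => (path_triple h).elim nPab nPbd
  have Eab : μ (T.lca a b) = Sum.inl (S.lca (σ a) (σ b)) := pab.1.2.2.2
  have Ebc : μ (T.lca b c) = Sum.inl (S.lca (σ b) (σ c)) := pbc.1.2.2.2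
  have Ecd : μ (T.lca c d) = Sum.inl (S.lca (σ c) (σ d)) := pcd.1.2.2.2
  have Nac : μ (T.lca a c) ≠ Sum.inl (S.lca (σ a) (σ c)) :=
    fun h => nac ⟨⟨la, lc, dac, h⟩, nPac⟩
  have Nad : μ (T.lca a d) ≠ Sum.inl (S.lca (σ a) (σ d)) :=
    fun h => nad ⟨⟨la, ld, dad, h⟩, nPad⟩
  have Nbd : μ (T.lca b d) ≠ Sum.inl (S.lca (σ b) (σ d)) :=
    fun h => nbd ⟨⟨lb, ld, dbd, h⟩, nPbd⟩
  have h12 : T.lca a b = T.lca b c := stage1 hsc Eab Ebc Nac nPac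
  have h23 : T.lca b c = T.lca c d := stage1 hsc Ebc Ecd Nbd nPbd
  have hmbc : S.lca (σ b) (σ c) = S.lca (σ a) (σ b) := by
    have := Ebc
    rw [← h12, Eab] at this
    exact (Sum.inl.inj this.symm)
  have hmcd : S.lca (σ c) (σ d) = S.lca (σ a) (σ b) := by
    have := Ecd
    rw [← h23, ← h12, Eab] at this
    exact (Sum.inl.inj this.symm)
  exact stage2 hsc hσ la lb lc ld rfl h12.symm (h12.trans h23).symm Eab rfl
    hmbc hmcd Nac Nad Nbd nPab nPac nPad

end P18

/-- For every relaxed σ-scenario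
`𝒮 = (T,S,μ,τ_T,τ_S,σ)`, the weak quasi-orthology graph `Ψw(𝒮)`, the weak
orthology graph `Θw(𝒮)`, and the strict orthology graph `Θs(𝒮)` are
cographs. -/
theorem orthology_graphs_are_cographs
    (T S : PPTree) (μ : T.V → S.VE) (τT : T.V → ℝ) (τS : S.V → ℝ)
    (σ : T.V → S.V)
    (hsc : IsRelaxedScenario T S μ τT τS) (hσ : SigmaCompat T S μ σ) :
    IsCographOnLeaves T (WeakQuasiOrtholog T S μ) ∧
    IsCographOnLeaves T (WeakOrtholog T S μ) ∧
    IsCographOnLeaves T (StrictOrtholog T S μ σ) := by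
  refine ⟨?_, ?_, ?_⟩
  · rintro ⟨a, b, c, d, la, lb, lc, ld, dab, dac, dad, dbc, dbd, dcd,
      pab, pbc, pcd, nac, nad, nbd⟩
    exact P18.p4lca (fun v => ∃ s, μ v = Sum.inl s ∧ s ≠ S.root ∧ ¬ S.isLeaf s)
      pab.2.2.2 pbc.2.2.2 pcd.2.2.2
      (fun ht => nac ⟨la, lc, dac, ht⟩)
      (fun ht => nad ⟨la, ld, dad, ht⟩)
      (fun ht => nbd ⟨lb, ld, dbd, ht⟩)
  · rintro ⟨a, b, c, d, la, lb, lc, ld, dab, dac, dad, dbc, dbd, dcd,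
      pab, pbc, pcd, nac, nad, nbd⟩
    have nPac : ¬ PathHGT T S μ a c :=
      fun h => (P18.path_triple h).elim pab.2 pbc.2
    have nPbd : ¬ PathHGT T S μ b d :=
      fun h => (P18.path_triple h).elim pbc.2 pcd.2
    have nPad : ¬ PathHGT T S μ a d :=
      fun h => (P18.path_triple h).elim pab.2 nPbd
    exact P18.p4lca (fun v => ∃ s, μ v = Sum.inl s ∧ s ≠ S.root ∧ ¬ S.isLeaf s)
      pab.1.2.2.2 pbc.1.2.2.2 pcd.1.2.2.2
      (fun ht => nac ⟨⟨la, lc, dac, ht⟩, nPac⟩)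
      (fun ht => nad ⟨⟨la, ld, dad, ht⟩, nPad⟩)
      (fun ht => nbd ⟨⟨lb, ld, dbd, ht⟩, nPbd⟩)
  · rintro ⟨a, b, c, d, la, lb, lc, ld, dab, dac, dad, dbc, dbd, dcd,
      pab, pbc, pcd, nac, nad, nbd⟩
    exact P18.strict_p4 hsc hσ la lb lc ld pab pbc pcd nac nad nbd dac dad dbd
end
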